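/- Among the 16 isometries of the doubled carpet D_p (the 8 isometries preserving the front and back copies of S_p together with their compositions with the face-swapping involution R), the only one whose fixed point set is a Jordan curve is R, and its fixed point set is the outer circle O; any other such isometry has fixed point set that is empty, finite, a Cantor set, or all of D_p. -/

import Mathlib

noncomputable section

/-- Membership in the standard square Sierpiński `p`-carpet via digit expansions. -/
def SpPair (p : ℕ) (x y : ℝ) : Prop :=
  ∃ a b : ℕ → ℕ,
    (∀ k, a k < p ∧ b k < p ∧ ¬(a k = (p - 1) / 2 ∧ b k = (p - 1) / 2)) ∧
    x = ∑' k : ℕ, (a k : ℝ) / (p : ℝ) ^ (k + 1) ∧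
    y = ∑' k : ℕ, (b k : ℝ) / (p : ℝ) ^ (k + 1)

/-- The standard square Sierpiński `p`-carpet `S_p ⊆ [0,1]²`. -/
def Sp (p : ℕ) : Set (ℝ × ℝ) := {z | SpPair p z.1 z.2}

/-- The outer peripheral circle `O = ∂[0,1]²`. -/
def Obd : Set (ℝ × ℝ) :=
  {z | (z.1 ∈ Set.Icc (0 : ℝ) 1 ∧ z.2 ∈ Set.Icc (0 : ℝ) 1) ∧
    (z.1 = 0 ∨ z.1 = 1 ∨ z.2 = 0 ∨ z.2 = 1)}

/-- The dihedral group of 8 isometries of the unit square `[0,1]²`. -/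
def D4set : Set ((ℝ × ℝ) → (ℝ × ℝ)) :=
  { fun z => z,
    fun z => (1 - z.2, z.1),
    fun z => (1 - z.1, 1 - z.2),
    fun z => (z.2, 1 - z.1),
    fun z => (z.2, z.1),
    fun z => (1 - z.1, z.2),
    fun z => (z.1, 1 - z.2),
    fun z => (1 - z.2, 1 - z.1) }

/-- `J` is a Jordan curve: the homeomorphic image of a circle. -/
def IsJordanCurve {X : Type*} [TopologicalSpace X] (J : Set X) : Prop :=
  ∃ φ : (Metric.sphere (0 : EuclideanSpace ℝ (Fin 2)) 1) → X,
    Continuous φ ∧ Function.Injective φ ∧ Set.range φ = J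

/-- The fixed point set in `D_p` of the isometry of the double `D_p` determined by a
square symmetry `g` and a Bool `s` recording composition with the face-swapping
involution `R`.  An isometry of the double is given by `g` on each face, composed with
`R` iff `s = true`; its fixed points project to the plane as follows: if `s = false`
the fixed points are the points of `S_p` (on either face) fixed by `g`, and if
`s = true` they are the points of the gluing curve `O` fixed by `g`. -/
def FixSet (p : ℕ) (g : (ℝ × ℝ) → (ℝ × ℝ)) (s : Bool) : Set (ℝ × ℝ) :=
  if s then {z ∈ Sp p | z ∈ Obd ∧ g z = z} else {z ∈ Sp p | g z = z}



namespace SC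

def val (p : ℕ) (b : ℕ → ℕ) : ℝ := ∑' k : ℕ, (b k : ℝ) / (p : ℝ) ^ (k + 1)

variable {p : ℕ}

lemma one_lt_q (hp : 3 ≤ p) : (1 : ℝ) < (p : ℝ) := by
  have : (3:ℝ) ≤ (p:ℝ) := by exact_mod_cast hp
  linarith

lemma q_pos (hp : 3 ≤ p) : (0 : ℝ) < (p : ℝ) := lt_trans one_pos (one_lt_q hp)

lemma q_ne (hp : 3 ≤ p) : (p:ℝ) ≠ 0 := ne_of_gt (q_pos hp)

lemma bound_eq (hp : 3 ≤ p) (k : ℕ) : (p:ℝ) / (p:ℝ) ^ (k+1) = ((p:ℝ)⁻¹) ^ k := by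
  have h := q_ne hp
  rw [inv_pow, pow_succ]
  rw [div_eq_iff (by positivity : (0:ℝ) < (p:ℝ)^k * (p:ℝ)).ne']
  field_simp

lemma summable_digits (hp : 3 ≤ p) {b : ℕ → ℕ} (hb : ∀ k, b k < p) :
    Summable (fun k : ℕ => (b k : ℝ) / (p : ℝ) ^ (k + 1)) := by
  have hq := one_lt_q hp
  have hg : Summable (fun k : ℕ => ((p:ℝ)⁻¹) ^ k) := by
    apply summable_geometric_of_lt_one (by positivity)
    rw [inv_lt_one_iff₀]; right; exact hq
  refine Summable.of_nonneg_of_le (fun k => by positivity) (fun k => ?_) hg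
  rw [← bound_eq hp k]
  have h1 : (b k : ℝ) ≤ (p:ℝ) := by exact_mod_cast (hb k).le
  gcongr

lemma val_nonneg (p : ℕ) (b : ℕ → ℕ) : 0 ≤ val p b :=
  tsum_nonneg (fun k => by positivity)

lemma tsum_geom (hp : 3 ≤ p) : ∑' k : ℕ, (1:ℝ) / (p:ℝ) ^ (k+1) = ((p:ℝ) - 1)⁻¹ := by
  have hq := one_lt_q hp
  have h0 : (0:ℝ) ≤ (p:ℝ)⁻¹ := by positivity
  have h1 : (p:ℝ)⁻¹ < 1 := by rw [inv_lt_one_iff₀]; right; exact hq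
  have hgeo := tsum_geometric_of_lt_one h0 h1
  have hne : (p:ℝ) ≠ 0 := q_ne hp
  calc ∑' k : ℕ, (1:ℝ) / (p:ℝ) ^ (k+1)
      = ∑' k : ℕ, (p:ℝ)⁻¹ * ((p:ℝ)⁻¹) ^ k := by
        apply tsum_congr; intro k
        rw [inv_pow, pow_succ, one_div, mul_comm ((p:ℝ)^k), mul_inv]
    _ = (p:ℝ)⁻¹ * (1 - (p:ℝ)⁻¹)⁻¹ := by rw [tsum_mul_left, hgeo]
    _ = ((p:ℝ) - 1)⁻¹ := by
        rw [← mul_inv]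
        congr 1
        field_simp

lemma val_const_max (hp : 3 ≤ p) : val p (fun _ => p - 1) = 1 := by
  have hq := one_lt_q hp
  have hne : (p:ℝ) - 1 ≠ 0 := by linarith
  have hcast : ((p - 1 : ℕ) : ℝ) = (p:ℝ) - 1 := by
    have h1 : (1:ℕ) ≤ p := by omega
    push_cast [h1]; ring
  unfold val
  calc ∑' k : ℕ, ((p - 1 : ℕ) : ℝ) / (p:ℝ) ^ (k+1)
      = ∑' k : ℕ, ((p:ℝ) - 1) * ((1:ℝ) / (p:ℝ) ^ (k+1)) := by
        apply tsum_congr; intro k; rw [hcast]; ring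
    _ = ((p:ℝ) - 1) * ((p:ℝ) - 1)⁻¹ := by rw [tsum_mul_left, tsum_geom hp]
    _ = 1 := by field_simp

lemma val_le_one (hp : 3 ≤ p) {b : ℕ → ℕ} (hb : ∀ k, b k < p) : val p b ≤ 1 := by
  have hmax : ∀ k : ℕ, p - 1 < p := fun _ => Nat.sub_lt (by omega) one_pos
  refine le_trans (Summable.tsum_le_tsum (fun k => ?_) (summable_digits hp hb)
    (summable_digits hp (b := fun _ => p - 1) hmax)) (le_of_eq (val_const_max hp))
  have h1 : b k ≤ p - 1 := by have := hb k; omega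
  have h2 : (b k : ℝ) ≤ ((p-1:ℕ):ℝ) := Nat.cast_le.mpr h1
  gcongr

lemma val_compl (hp : 3 ≤ p) {b : ℕ → ℕ} (hb : ∀ k, b k < p) :
    val p (fun k => p - 1 - b k) = 1 - val p b := by
  have h1 : ∀ k, ((p - 1 - b k : ℕ) : ℝ) = ((p-1:ℕ):ℝ) - (b k : ℝ) := by
    intro k
    have hle : b k ≤ p - 1 := by have := hb k; omega
    push_cast [hle]
    ring
  have hs1 := summable_digits hp (b := fun _ => p - 1) (fun k => Nat.sub_lt (by omega) one_pos)
  have hs2 := summable_digits hp hb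
  have hmax := val_const_max hp
  unfold val at *
  calc ∑' k : ℕ, ((p - 1 - b k : ℕ) : ℝ) / (p:ℝ) ^ (k+1)
      = ∑' k : ℕ, (((p-1:ℕ):ℝ) / (p:ℝ)^(k+1) - (b k : ℝ) / (p:ℝ)^(k+1)) := by
        apply tsum_congr; intro k; rw [h1]; ring
    _ = 1 - ∑' k : ℕ, (b k : ℝ) / (p:ℝ)^(k+1) := by
        rw [Summable.tsum_sub hs1 hs2, hmax]

lemma val_head (hp : 3 ≤ p) {b : ℕ → ℕ} (hb : ∀ k, b k < p) :
    val p b = ((b 0 : ℝ) + val p (fun k => b (k+1))) / (p:ℝ) := by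
  have hs := summable_digits hp hb
  have h0 := Summable.tsum_eq_zero_add hs
  have hne := q_ne hp
  unfold val
  rw [h0]
  have hh : ∀ k : ℕ, (b (k+1) : ℝ) / (p:ℝ) ^ (k+1+1) = (p:ℝ)⁻¹ * ((b (k+1) : ℝ) / (p:ℝ)^(k+1)) := by
    intro k
    rw [inv_mul_eq_div, div_div, ← pow_succ]
  rw [tsum_congr hh, tsum_mul_left]
  simp only [zero_add, pow_one]
  field_simp

lemma val_split (hp : 3 ≤ p) {b : ℕ → ℕ} (hb : ∀ k, b k < p) (n : ℕ) :
    val p b = (∑ i ∈ Finset.range n, (b i : ℝ) / (p:ℝ)^(i+1)) + val p (fun k => b (n + k)) / (p:ℝ)^n := by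
  have hs := summable_digits hp hb
  have h := (Summable.sum_add_tsum_nat_add (f := fun k : ℕ => (b k : ℝ) / (p:ℝ)^(k+1)) n hs).symm
  unfold val
  rw [h]
  congr 1
  have hh : ∀ i : ℕ, (b (i + n) : ℝ) / (p:ℝ) ^ (i + n + 1) = ((p:ℝ)^n)⁻¹ * ((b (n + i) : ℝ) / (p:ℝ)^(i+1)) := by
    intro i
    rw [inv_mul_eq_div, div_div, ← pow_add, add_comm n i]
    congr 2
    ring
  rw [tsum_congr hh, tsum_mul_left, div_eq_inv_mul]

end SC
namespace SC
variable {p : ℕ}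

/-- If two digit sequences have the same value and the second starts lower,
then the first is `b0+1` followed by zeros against `p-1`s. -/
lemma tail_struct (hp : 3 ≤ p) {a b : ℕ → ℕ} (ha : ∀ k, a k < p) (hb : ∀ k, b k < p)
    (h : val p a = val p b) (hlt : b 0 < a 0) :
    a 0 = b 0 + 1 ∧ (∀ k, a (k+1) = 0) ∧ (∀ k, b (k+1) = p - 1) := by
  have hne := q_ne hp
  set A := val p (fun k => a (k+1)) with hA
  set B := val p (fun k => b (k+1)) with hB
  have hA0 : 0 ≤ A := val_nonneg _ _
  have hB0 : 0 ≤ B := val_nonneg _ _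
  have hA1 : A ≤ 1 := val_le_one hp (fun k => ha (k+1))
  have hB1 : B ≤ 1 := val_le_one hp (fun k => hb (k+1))
  have hkey : (a 0 : ℝ) + A = (b 0 : ℝ) + B := by
    have h1 := val_head hp ha
    have h2 := val_head hp hb
    rw [h1, h2, div_eq_div_iff hne hne] at h
    have := mul_right_cancel₀ hne h
    linarith
  have hge : (b 0 : ℝ) + 1 ≤ (a 0 : ℝ) := by exact_mod_cast hlt
  have hd1 : (a 0 : ℝ) = (b 0 : ℝ) + 1 := by linarith
  have hA0' : A = 0 := by linarith
  have hB1' : B = 1 := by linarith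
  refine ⟨by exact_mod_cast hd1, ?_, ?_⟩
  · intro k
    have hsum := summable_digits hp (fun k => ha (k+1))
    have hterm : (a (k+1) : ℝ) / (p:ℝ)^(k+1) ≤ 0 := by
      rw [← hA0']
      exact Summable.le_tsum hsum k (fun j _ => by positivity)
    have hterm0 : (0:ℝ) ≤ (a (k+1) : ℝ) / (p:ℝ)^(k+1) := by positivity
    have : (a (k+1) : ℝ) / (p:ℝ)^(k+1) = 0 := le_antisymm hterm hterm0
    have : (a (k+1) : ℝ) = 0 := by
      field_simp at this
      exact_mod_cast this
    exact_mod_cast this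
  · intro k
    have hC : val p (fun k => p - 1 - b (k+1)) = 0 := by
      rw [val_compl hp (fun k => hb (k+1)), ← hB, hB1', sub_self]
    have hsum := summable_digits hp (b := fun k => p - 1 - b (k+1))
      (fun k => by show p - 1 - b (k+1) < p; have := hb (k+1); omega)
    have hterm : ((p - 1 - b (k+1) : ℕ) : ℝ) / (p:ℝ)^(k+1) ≤ 0 := by
      rw [← hC]
      exact Summable.le_tsum hsum k (fun j _ => by positivity)
    have hterm0 : (0:ℝ) ≤ ((p - 1 - b (k+1) : ℕ):ℝ) / (p:ℝ)^(k+1) := by positivity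
    have h0 : ((p - 1 - b (k+1) : ℕ) : ℝ) = 0 := by
      have := le_antisymm hterm hterm0
      field_simp at this
      exact_mod_cast this
    have : p - 1 - b (k+1) = 0 := by exact_mod_cast h0
    have := hb (k+1)
    omega

lemma tails_eq (hp : 3 ≤ p) {a b : ℕ → ℕ} (ha : ∀ k, a k < p) (hb : ∀ k, b k < p)
    (h : val p a = val p b) (n : ℕ) (hpre : ∀ k, k < n → a k = b k) :
    val p (fun k => a (n + k)) = val p (fun k => b (n + k)) := by
  have h1 := val_split hp ha n
  have h2 := val_split hp hb n
  rw [h1, h2] at h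
  have hsum : (∑ i ∈ Finset.range n, (a i : ℝ) / (p:ℝ)^(i+1))
      = ∑ i ∈ Finset.range n, (b i : ℝ) / (p:ℝ)^(i+1) := by
    apply Finset.sum_congr rfl
    intro i hi
    rw [hpre i (Finset.mem_range.mp hi)]
  rw [hsum] at h
  have hp0 : (0:ℝ) < (p:ℝ)^n := by positivity
  have h2 := add_left_cancel h
  rw [div_eq_div_iff hp0.ne' hp0.ne'] at h2
  exact mul_right_cancel₀ hp0.ne' h2

lemma twoExp (hp : 3 ≤ p) {a b : ℕ → ℕ} (ha : ∀ k, a k < p) (hb : ∀ k, b k < p)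
    (h : val p a = val p b) (n : ℕ) (hpre : ∀ k, k < n → a k = b k) (hlt : b n < a n) :
    a n = b n + 1 ∧ ∀ k, n < k → a k = 0 ∧ b k = p - 1 := by
  have ht := tails_eq hp ha hb h n hpre
  have := tail_struct hp (a := fun k => a (n + k)) (b := fun k => b (n + k))
    (fun k => ha _) (fun k => hb _) ht (by simpa using hlt)
  obtain ⟨h1, h2, h3⟩ := this
  constructor
  · simpa using h1
  · intro k hk
    obtain ⟨j, rfl⟩ : ∃ j, k = n + (j + 1) := ⟨k - n - 1, by omega⟩
    exact ⟨h2 j, h3 j⟩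

/-- uniqueness of the expansion of 1/2 -/
lemma half_val (hp : 3 ≤ p) (hodd : Odd p) {a : ℕ → ℕ} (ha : ∀ k, a k < p)
    (h : val p a = 1/2) : ∀ k, a k = (p - 1)/2 := by
  obtain ⟨m, hm⟩ : ∃ m, p = 2*m + 1 := by
    obtain ⟨r, hr⟩ := hodd; exact ⟨r, by omega⟩
  have hm2 : (p - 1)/2 = m := by omega
  have hq := one_lt_q hp
  have hne := q_ne hp
  have step : ∀ b : ℕ → ℕ, (∀ k, b k < p) → val p b = 1/2 →
      b 0 = m ∧ val p (fun k => b (k+1)) = 1/2 := by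
    intro b hbd hbv
    set T := val p (fun k => b (k+1)) with hT
    have hT0 : 0 ≤ T := val_nonneg _ _
    have hT1 : T ≤ 1 := val_le_one hp (fun k => hbd (k+1))
    have hkey : (b 0 : ℝ) + T = (p:ℝ)/2 := by
      have h1 := val_head hp hbd
      rw [hbv] at h1
      rw [div_eq_div_iff (by norm_num : (2:ℝ) ≠ 0) (q_ne hp)] at h1
      linarith
    have hpm : (p:ℝ) = 2*(m:ℝ) + 1 := by exact_mod_cast hm
    have hz : ((b 0 : ℤ) - (m:ℤ) : ℝ) = 1/2 - T := by push_cast; linarith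
    have habs : |((b 0 : ℤ) - (m:ℤ) : ℝ)| < 1 := by
      rw [hz, abs_lt]; constructor <;> linarith
    have h2 : |(b 0 : ℤ) - (m:ℤ)| < 1 := by exact_mod_cast habs
    rw [abs_lt] at h2
    have hb0 : b 0 = m := by omega
    refine ⟨hb0, ?_⟩
    have : ((b 0:ℤ) - (m:ℤ) : ℝ) = 0 := by rw [hb0]; push_cast; ring
    rw [this] at hz
    linarith
  have main : ∀ n, val p (fun k => a (n + k)) = 1/2 := by
    intro n
    induction n with
    | zero => simpa using h
    | succ n ih =>
      have := (step (fun k => a (n + k)) (fun k => ha _) ih).2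
      have he : (fun k => a (n + (k+1))) = (fun k => a ((n+1) + k)) := by
        funext k; congr 1; omega
      rwa [he] at this
  intro k
  have := (step (fun j => a (k + j)) (fun j => ha _) (main k)).1
  simpa [hm2] using this

/-- the Cantor-like set: reals with an expansion avoiding the middle digit -/
def Kc (p : ℕ) : Set ℝ :=
  {x | ∃ c : ℕ → ℕ, (∀ k, c k < p ∧ c k ≠ (p - 1)/2) ∧ x = val p c}

lemma m_lt (hp : 3 ≤ p) : (p-1)/2 < p := by omega
lemma m_pos (hp : 3 ≤ p) : 1 ≤ (p-1)/2 := by omega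

/-- a pair of expansions of the same number avoiding the simultaneous middle digit
gives a single expansion avoiding the middle digit -/
lemma pairK (hp : 3 ≤ p) (hodd : Odd p) {a b : ℕ → ℕ}
    (hd : ∀ k, a k < p ∧ b k < p ∧ ¬(a k = (p-1)/2 ∧ b k = (p-1)/2))
    (h : val p a = val p b) : val p a ∈ Kc p := by
  set m := (p-1)/2 with hm
  have hm1 : 1 ≤ m := m_pos hp
  have hmp : 2*m = p - 1 := by
    obtain ⟨r, hr⟩ := hodd; omega
  have ha : ∀ k, a k < p := fun k => (hd k).1
  have hb : ∀ k, b k < p := fun k => (hd k).2.1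
  by_cases hab : a = b
  · refine ⟨a, fun k => ⟨ha k, ?_⟩, rfl⟩
    have := (hd k).2.2
    rw [hab] at this ⊢
    tauto
  · have hex : ∃ n, a n ≠ b n := by
      by_contra hno
      push_neg at hno
      exact hab (funext hno)
    set n := Nat.find hex with hn
    have hne : a n ≠ b n := Nat.find_spec hex
    have hpre : ∀ k, k < n → a k = b k := by
      intro k hk
      by_contra hne'
      exact absurd (Nat.find_le hne' : n ≤ k) (by omega)
    have hprem : ∀ k, k < n → a k ≠ m := by
      intro k hk hm'
      exact (hd k).2.2 ⟨hm', by rw [← hpre k hk]; exact hm'⟩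
    rcases Nat.lt_or_ge (b n) (a n) with hcase | hcase
    · obtain ⟨h1, h2⟩ := twoExp hp ha hb h n hpre hcase
      by_cases hanm : a n = m
      · -- use b : b n = m - 1, then p-1's
        refine ⟨b, fun k => ⟨hb k, ?_⟩, h⟩
        rcases lt_trichotomy k n with hk | hk | hk
        · rw [← hpre k hk]; exact hprem k hk
        · subst hk; omega
        · have := (h2 k hk).2; omega
      · refine ⟨a, fun k => ⟨ha k, ?_⟩, rfl⟩
        rcases lt_trichotomy k n with hk | hk | hk
        · exact hprem k hk
        · subst hk; exact hanm
        · have := (h2 k hk).1; omega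
    · have hcase' : a n < b n := by omega
      obtain ⟨h1, h2⟩ := twoExp hp hb ha h.symm n (fun k hk => (hpre k hk).symm) hcase'
      by_cases hbnm : b n = m
      · refine ⟨a, fun k => ⟨ha k, ?_⟩, rfl⟩
        rcases lt_trichotomy k n with hk | hk | hk
        · exact hprem k hk
        · subst hk; omega
        · have := (h2 k hk).2; omega
      · refine ⟨b, fun k => ⟨hb k, ?_⟩, h⟩
        rcases lt_trichotomy k n with hk | hk | hk
        · rw [← hpre k hk]; exact hprem k hk
        · subst hk; exact hbnm
        · have := (h2 k hk).1; omega

end SC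
namespace SC
variable {p : ℕ}

lemma val_half (hp : 3 ≤ p) (hodd : Odd p) : val p (fun _ => (p-1)/2) = 1/2 := by
  obtain ⟨m, hm⟩ : ∃ m, p = 2*m + 1 := by obtain ⟨r, hr⟩ := hodd; exact ⟨r, by omega⟩
  have hm2 : (p - 1)/2 = m := by omega
  have hm1 : 1 ≤ m := by omega
  have hcast : ((m:ℝ)) = ((p:ℝ) - 1)/2 := by
    have : (p:ℝ) = 2*(m:ℝ)+1 := by exact_mod_cast hm
    linarith
  have hne1 : (p:ℝ) - 1 ≠ 0 := by have := one_lt_q hp; linarith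
  unfold val
  calc ∑' k : ℕ, (((p-1)/2 : ℕ) : ℝ) / (p:ℝ) ^ (k+1)
      = ∑' k : ℕ, (m:ℝ) * ((1:ℝ) / (p:ℝ)^(k+1)) := by
        apply tsum_congr; intro k; rw [hm2]; ring
    _ = (m:ℝ) * ((p:ℝ) - 1)⁻¹ := by rw [tsum_mul_left, tsum_geom hp]
    _ = 1/2 := by
        rw [hcast]
        field_simp

/-- numbers of the form (2j+1)/(2 p^n) are not in the Cantor set -/
lemma gap_point_not_mem (hp : 3 ≤ p) (hodd : Odd p) (n : ℕ) (j : ℤ) :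
    ((2*(j:ℝ)+1)/(2*(p:ℝ)^n)) ∉ Kc p := by
  rintro ⟨c, hc, hx⟩
  have hcdd : ∀ k, c k < p := fun k => (hc k).1
  have hq := one_lt_q hp
  have hne := q_ne hp
  have hpn : (0:ℝ) < (p:ℝ)^n := by positivity
  set T := val p (fun k => c (n + k)) with hT
  have hT0 : 0 ≤ T := val_nonneg _ _
  have hT1 : T ≤ 1 := val_le_one hp (fun k => hcdd _)
  have hsplit := val_split hp hcdd n
  rw [← hx] at hsplit
  -- multiply by p^n
  set S := ∑ i ∈ Finset.range n, (c i : ℝ) / (p:ℝ)^(i+1) with hS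
  have hSint : ∃ N : ℤ, (N:ℝ) = S * (p:ℝ)^n := by
    refine ⟨∑ i ∈ Finset.range n, (c i : ℤ) * (p:ℤ)^(n - 1 - i), ?_⟩
    rw [hS, Finset.sum_mul]
    push_cast
    apply Finset.sum_congr rfl
    intro i hi
    have hin : i < n := Finset.mem_range.mp hi
    have : (p:ℝ)^n = (p:ℝ)^(i+1) * (p:ℝ)^(n-1-i) := by
      rw [← pow_add]
      congr 1
      omega
    rw [this]
    field_simp
  obtain ⟨N, hN⟩ := hSint
  have hkey : (j:ℝ) + 1/2 = (N:ℝ) + T := by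
    have h2 : (2*(j:ℝ)+1)/(2*(p:ℝ)^n) * (p:ℝ)^n = S * (p:ℝ)^n + T := by
      rw [hsplit, hT]
      field_simp
    have hcancel : (2*(j:ℝ)+1)/(2*(p:ℝ)^n) * (p:ℝ)^n = (j:ℝ) + 1/2 := by
      field_simp
    rw [hcancel, ← hN] at h2
    exact h2
  have hz : ((j:ℤ) - N : ℝ) = T - 1/2 := by push_cast; linarith
  have habs : |((j:ℤ) - N : ℝ)| < 1 := by rw [hz, abs_lt]; constructor <;> linarith
  have h2 : |(j:ℤ) - N| < 1 := by exact_mod_cast habs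
  rw [abs_lt] at h2
  have hjN : j = N := by omega
  have hThalf : T = 1/2 := by
    rw [hjN] at hz
    simp at hz
    linarith
  have := half_val hp hodd (fun k => hcdd (n + k)) hThalf 0
  exact (hc n).2 (by simpa using this)

lemma Kc_gaps (hp : 3 ≤ p) (hodd : Odd p) :
    ∀ a b : ℝ, a < b → ∃ c, a < c ∧ c < b ∧ c ∉ Kc p := by
  intro a b hab
  have hq := one_lt_q hp
  obtain ⟨n, hn⟩ : ∃ n : ℕ, 3/(b - a) < (p:ℝ)^n := pow_unbounded_of_one_lt _ hq
  have hpn : (0:ℝ) < (p:ℝ)^n := by positivity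
  have h4 : 3 < (b-a) * (p:ℝ)^n := by
    rw [div_lt_iff₀ (by linarith : (0:ℝ) < b - a)] at hn
    nlinarith
  set j : ℤ := ⌊a * (p:ℝ)^n⌋ + 1 with hj
  refine ⟨(2*(j:ℝ)+1)/(2*(p:ℝ)^n), ?_, ?_, gap_point_not_mem hp hodd n j⟩
  · rw [lt_div_iff₀ (by positivity)]
    have := Int.lt_floor_add_one (a * (p:ℝ)^n)
    push_cast [hj]
    nlinarith
  · rw [div_lt_iff₀ (by positivity)]
    have := Int.floor_le (a * (p:ℝ)^n)
    push_cast [hj]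
    nlinarith [h4, hpn]

lemma Kc_nonempty (hp : 3 ≤ p) : (0:ℝ) ∈ Kc p := by
  refine ⟨fun _ => 0, fun k => ⟨by show 0 < p; omega,
    by show (0:ℕ) ≠ (p-1)/2; have := m_pos hp; omega⟩, ?_⟩
  unfold val
  simp

lemma Kc_compact (hp : 3 ≤ p) : IsCompact (Kc p) := by
  have hq := one_lt_q hp
  set S : Set (ℕ → Fin p) := {f | ∀ k, (f k : ℕ) ≠ (p-1)/2} with hSdef
  have hScl : IsClosed S := by
    have : S = ⋂ k : ℕ, {f : ℕ → Fin p | (f k : ℕ) ≠ (p-1)/2} := by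
      ext f; simp [hSdef]
    rw [this]
    apply isClosed_iInter
    intro k
    have heq : {f : ℕ → Fin p | (f k : ℕ) = (p-1)/2}
        = (fun f : ℕ → Fin p => f k) ⁻¹' {d : Fin p | (d:ℕ) = (p-1)/2} := rfl
    have : IsOpen {f : ℕ → Fin p | (f k : ℕ) = (p-1)/2} := by
      rw [heq]
      exact (continuous_apply k).isOpen_preimage _ (isOpen_discrete _)
    exact isClosed_compl_iff.mpr this
  have hpnn : 0 < p := by omega
  have : Fin p → ℝ := fun d => (d:ℝ)
  have hcode : Continuous (fun f : ℕ → Fin p => ∑' k : ℕ, ((f k : ℕ) : ℝ) / (p:ℝ)^(k+1)) := by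
    apply continuous_tsum (u := fun k : ℕ => ((p:ℝ)⁻¹)^k)
    · intro k
      exact (continuous_of_discreteTopology (α := Fin p)
        (f := fun d : Fin p => ((d:ℕ):ℝ) / (p:ℝ)^(k+1))).comp (continuous_apply k)
    · apply summable_geometric_of_lt_one (by positivity)
      rw [inv_lt_one_iff₀]; right; exact hq
    · intro k f
      rw [Real.norm_eq_abs, abs_of_nonneg (by positivity), ← bound_eq hp k]
      have : ((f k : ℕ) : ℝ) ≤ (p:ℝ) := by exact_mod_cast (f k).2.le
      gcongr
  have hKeq : Kc p = (fun f : ℕ → Fin p => ∑' k : ℕ, ((f k : ℕ) : ℝ) / (p:ℝ)^(k+1)) '' S := by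
    ext x
    constructor
    · rintro ⟨c, hc, rfl⟩
      refine ⟨fun k => ⟨c k, (hc k).1⟩, fun k => (hc k).2, rfl⟩
    · rintro ⟨f, hf, rfl⟩
      exact ⟨fun k => (f k : ℕ), fun k => ⟨(f k).2, hf k⟩, rfl⟩
  rw [hKeq]
  exact (hScl.isCompact).image hcode

lemma Kc_acc (hp : 3 ≤ p) : ∀ x ∈ Kc p, ∀ ε > 0, ∃ y ∈ Kc p, y ≠ x ∧ |y - x| < ε := by
  rintro x ⟨c, hc, rfl⟩ ε hε
  have hcdd : ∀ k, c k < p := fun k => (hc k).1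
  have hq := one_lt_q hp
  obtain ⟨n, hn⟩ : ∃ n : ℕ, (p:ℝ)/ε < (p:ℝ)^n := pow_unbounded_of_one_lt _ hq
  have hpn : (0:ℝ) < (p:ℝ)^n := by positivity
  have hppos := q_pos hp
  set m := (p-1)/2 with hm
  have hm1 : 1 ≤ m := m_pos hp
  have hmp : m < p - 1 := by omega
  set d : ℕ := if c n = 0 then p - 1 else 0 with hd
  have hdp : d < p := by rw [hd]; split <;> omega
  have hdm : d ≠ m := by rw [hd]; split <;> omega
  have hdc : d ≠ c n := by
    rw [hd]; split
    · omega
    · omega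
  have hupd : ∀ k, Function.update c n d k < p := by
    intro k
    rcases eq_or_ne k n with rfl | hkn
    · simpa [Function.update_self] using hdp
    · simpa [Function.update_of_ne hkn] using hcdd k
  have hdiff : val p (Function.update c n d) - val p c = ((d:ℝ) - (c n : ℝ))/(p:ℝ)^(n+1) := by
    unfold val
    rw [← Summable.tsum_sub (summable_digits hp hupd) (summable_digits hp hcdd)]
    rw [tsum_eq_single n ?_]
    · rw [Function.update_self, div_sub_div_same]
    · intro k hk
      rw [Function.update_of_ne hk, sub_self]
  refine ⟨val p (Function.update c n d), ?_, ?_, ?_⟩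
  · refine ⟨Function.update c n d, fun k => ⟨hupd k, ?_⟩, rfl⟩
    rcases eq_or_ne k n with rfl | hkn
    · simpa [Function.update_self] using hdm
    · simpa [Function.update_of_ne hkn] using (hc k).2
  · intro heq
    rw [heq, sub_self] at hdiff
    have hne2 : (d:ℝ) - (c n : ℝ) ≠ 0 := by
      have : (d:ℝ) ≠ (c n : ℝ) := by exact_mod_cast hdc
      exact sub_ne_zero.mpr this
    have := hdiff.symm
    rw [div_eq_zero_iff] at this
    rcases this with h | h
    · exact hne2 h
    · exact (by positivity : (0:ℝ) < (p:ℝ)^(n+1)).ne' h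
  · rw [hdiff, abs_div, abs_of_pos (by positivity : (0:ℝ) < (p:ℝ)^(n+1))]
    have habs : |(d:ℝ) - (c n : ℝ)| ≤ (p:ℝ) := by
      have h1 : (d:ℝ) ≤ p := by exact_mod_cast hdp.le
      have h2 : ((c n : ℕ):ℝ) ≤ p := by exact_mod_cast (hcdd n).le
      have h3 : (0:ℝ) ≤ (d:ℝ) := by positivity
      have h4 : (0:ℝ) ≤ ((c n : ℕ):ℝ) := by positivity
      rw [abs_le]
      constructor <;> linarith
    have h5 : (p:ℝ) < ε * (p:ℝ)^n := by
      rw [div_lt_iff₀ hε] at hn; linarith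
    have h6 : |(d:ℝ) - (c n : ℝ)| / (p:ℝ)^(n+1) ≤ (p:ℝ)/(p:ℝ)^(n+1) := by gcongr
    refine lt_of_le_of_lt h6 ?_
    rw [div_lt_iff₀ (by positivity)]
    rw [pow_succ]
    nlinarith [pow_pos hppos n]

end SC
namespace Cantor

open Set

variable (K : Set ℝ)

structure Pc where
  lo : ℝ
  hi : ℝ
  hlo : lo ∉ K
  hhi : hi ∉ K
  hne : (K ∩ Set.Icc lo hi).Nonempty

variable {K}

def Q (P : Pc K) : Set ℝ := K ∩ Set.Icc P.lo P.hi

variable (hK : IsCompact K)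
  (hacc : ∀ x ∈ K, ∀ ε > 0, ∃ y ∈ K, y ≠ x ∧ |y - x| < ε)
  (hgap : ∀ a b : ℝ, a < b → ∃ c, a < c ∧ c < b ∧ c ∉ K)

include hK

lemma Qcompact (P : Pc K) : IsCompact (Q P) := hK.inter_right isClosed_Icc

lemma Qsub (P : Pc K) : Q P ⊆ K := Set.inter_subset_left

def A (P : Pc K) : ℝ := sInf (Q P)
def B (P : Pc K) : ℝ := sSup (Q P)

lemma A_mem (P : Pc K) : A P ∈ Q P := (Qcompact hK P).sInf_mem P.hne
lemma B_mem (P : Pc K) : B P ∈ Q P := (Qcompact hK P).sSup_mem P.hne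

lemma le_B (P : Pc K) {x : ℝ} (hx : x ∈ Q P) : x ≤ B P :=
  le_csSup (Qcompact hK P).bddAbove hx

lemma A_le (P : Pc K) {x : ℝ} (hx : x ∈ Q P) : A P ≤ x :=
  csInf_le (Qcompact hK P).bddBelow hx

lemma A_le_B (P : Pc K) : A P ≤ B P := A_le hK P (B_mem hK P)

include hacc hgap

lemma exists_split (P : Pc K) :
    ∃ c : ℝ, c ∉ K ∧ P.lo ≤ c ∧ c ≤ P.hi ∧
      (K ∩ Set.Icc P.lo c).Nonempty ∧ (K ∩ Set.Icc c P.hi).Nonempty ∧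
      sSup (K ∩ Set.Icc P.lo c) - sInf (K ∩ Set.Icc P.lo c) ≤ 3/4 * (B P - A P) ∧
      sSup (K ∩ Set.Icc c P.hi) - sInf (K ∩ Set.Icc c P.hi) ≤ 3/4 * (B P - A P) := by
  set a := A P with ha
  set b := B P with hb
  have haQ : a ∈ Q P := A_mem hK P
  have hbQ : b ∈ Q P := B_mem hK P
  have hab : a ≤ b := A_le_B hK P
  have haK : a ∈ K := (Qsub hK P) haQ
  have hlo_a : P.lo < a := by
    rcases lt_or_eq_of_le haQ.2.1 with h | h
    · exact h
    · exact absurd (h ▸ haK) P.hlo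
  have hb_hi : b < P.hi := by
    rcases lt_or_eq_of_le hbQ.2.2 with h | h
    · exact h
    · exact absurd (h ▸ (Qsub hK P) hbQ) P.hhi
  have haltb : a < b := by
    rcases lt_or_eq_of_le hab with h | h
    · exact h
    · -- singleton: contradiction with accumulation
      exfalso
      set ε := min (a - P.lo) (P.hi - a) with hε
      have hε0 : 0 < ε := by
        apply lt_min <;> [linarith; linarith [h ▸ hb_hi]]
      obtain ⟨y, hyK, hyne, hyd⟩ := hacc a haK ε hε0
      have hy1 : P.lo ≤ y := by
        have h1 : ε ≤ a - P.lo := min_le_left _ _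
        have := abs_lt.mp hyd
        linarith
      have hy2 : y ≤ P.hi := by
        have h1 : ε ≤ P.hi - a := min_le_right _ _
        have := abs_lt.mp hyd
        linarith
      have hyQ : y ∈ Q P := ⟨hyK, hy1, hy2⟩
      have h1 : a ≤ y := A_le hK P hyQ
      have h2 : y ≤ b := le_B hK P hyQ
      exact hyne (le_antisymm (h ▸ h2) h1)
  obtain ⟨c, hc1, hc2, hcK⟩ := hgap ((a+b)/2 - (b-a)/4) ((a+b)/2 + (b-a)/4) (by linarith)
  have hac : a < c := by linarith
  have hcb : c < b := by linarith
  refine ⟨c, hcK, by linarith, by linarith, ⟨a, haK, haQ.2.1, hac.le⟩,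
    ⟨b, (Qsub hK P) hbQ, hcb.le, hbQ.2.2⟩, ?_, ?_⟩
  · -- left piece lives in [a, c]
    have hsub : K ∩ Set.Icc P.lo c ⊆ Set.Icc a c := by
      rintro x ⟨hxK, hx1, hx2⟩
      exact ⟨A_le hK P ⟨hxK, hx1, le_trans hx2 (by linarith)⟩, hx2⟩
    have hne' : (K ∩ Set.Icc P.lo c).Nonempty := ⟨a, haK, haQ.2.1, hac.le⟩
    have hbdd : BddAbove (K ∩ Set.Icc P.lo c) := ⟨c, fun x hx => (hsub hx).2⟩
    have h1 : sSup (K ∩ Set.Icc P.lo c) ≤ c := csSup_le hne' (fun x hx => (hsub hx).2)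
    have h2 : a ≤ sInf (K ∩ Set.Icc P.lo c) := le_csInf hne' (fun x hx => (hsub hx).1)
    linarith
  · have hsub : K ∩ Set.Icc c P.hi ⊆ Set.Icc c b := by
      rintro x ⟨hxK, hx1, hx2⟩
      exact ⟨hx1, le_B hK P ⟨hxK, le_trans (by linarith) hx1, hx2⟩⟩
    have hne' : (K ∩ Set.Icc c P.hi).Nonempty := ⟨b, (Qsub hK P) hbQ, hcb.le, hbQ.2.2⟩
    have h1 : sSup (K ∩ Set.Icc c P.hi) ≤ b := csSup_le hne' (fun x hx => (hsub hx).2)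
    have h2 : c ≤ sInf (K ∩ Set.Icc c P.hi) := le_csInf hne' (fun x hx => (hsub hx).1)
    linarith

/-- split a piece into two halves -/
def splitPc (P : Pc K) (i : Bool) : Pc K :=
  let c := (exists_split hK hacc hgap P).choose
  let h := (exists_split hK hacc hgap P).choose_spec
  if i then ⟨c, P.hi, h.1, P.hhi, h.2.2.2.2.1⟩
  else ⟨P.lo, c, P.hlo, h.1, h.2.2.2.1⟩

lemma splitPc_false_lo (P : Pc K) : (splitPc hK hacc hgap P false).lo = P.lo := by
  simp [splitPc]

lemma splitPc_false_hi (P : Pc K) :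
    (splitPc hK hacc hgap P false).hi = (exists_split hK hacc hgap P).choose := by
  simp [splitPc]

lemma splitPc_true_lo (P : Pc K) :
    (splitPc hK hacc hgap P true).lo = (exists_split hK hacc hgap P).choose := by
  simp [splitPc]

lemma splitPc_true_hi (P : Pc K) : (splitPc hK hacc hgap P true).hi = P.hi := by
  simp [splitPc]

lemma split_sub (P : Pc K) (i : Bool) : Q (splitPc hK hacc hgap P i) ⊆ Q P := by
  have h := (exists_split hK hacc hgap P).choose_spec
  cases i
  · rintro x ⟨hxK, hx1, hx2⟩
    rw [splitPc_false_lo] at hx1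
    rw [splitPc_false_hi] at hx2
    exact ⟨hxK, hx1, le_trans hx2 h.2.2.1⟩
  · rintro x ⟨hxK, hx1, hx2⟩
    rw [splitPc_true_lo] at hx1
    rw [splitPc_true_hi] at hx2
    exact ⟨hxK, le_trans h.2.1 hx1, hx2⟩

lemma split_union (P : Pc K) {x : ℝ} (hx : x ∈ Q P) :
    x ∈ Q (splitPc hK hacc hgap P false) ∨ x ∈ Q (splitPc hK hacc hgap P true) := by
  have h := (exists_split hK hacc hgap P).choose_spec
  rcases le_total x (exists_split hK hacc hgap P).choose with hc | hc
  · left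
    refine ⟨hx.1, ?_, ?_⟩
    · rw [splitPc_false_lo]; exact hx.2.1
    · rw [splitPc_false_hi]; exact hc
  · right
    refine ⟨hx.1, ?_, ?_⟩
    · rw [splitPc_true_lo]; exact hc
    · rw [splitPc_true_hi]; exact hx.2.2

lemma split_disj (P : Pc K) {x : ℝ}
    (h0 : x ∈ Q (splitPc hK hacc hgap P false)) (h1 : x ∈ Q (splitPc hK hacc hgap P true)) :
    False := by
  have h := (exists_split hK hacc hgap P).choose_spec
  have hxc : x = (exists_split hK hacc hgap P).choose := by
    have h2 := h0.2.2
    have h3 := h1.2.1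
    rw [splitPc_false_hi] at h2
    rw [splitPc_true_lo] at h3
    exact le_antisymm h2 h3
  exact h.1 (hxc ▸ h0.1)

lemma split_width (P : Pc K) (i : Bool) :
    B (splitPc hK hacc hgap P i) - A (splitPc hK hacc hgap P i) ≤ 3/4 * (B P - A P) := by
  have h := (exists_split hK hacc hgap P).choose_spec
  cases i
  · show B (⟨P.lo, _, _, _, _⟩ : Pc K) - _ ≤ _
    exact h.2.2.2.2.2.1
  · exact h.2.2.2.2.2.2

variable (hne : K.Nonempty)
include hne

/-- the root piece -/
def root : Pc K := by
  refine ⟨sInf K - 1, sSup K + 1, ?_, ?_, ?_⟩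
  · intro h
    have := csInf_le hK.bddBelow h
    linarith
  · intro h
    have := le_csSup hK.bddAbove h
    linarith
  · obtain ⟨z, hz⟩ := hne
    exact ⟨z, hz, by linarith [csInf_le hK.bddBelow hz], by linarith [le_csSup hK.bddAbove hz]⟩

lemma root_mem {z : ℝ} (hz : z ∈ K) : z ∈ Q (root hK hne) := by
  refine ⟨hz, ?_, ?_⟩ <;> simp only [root] <;>
    [linarith [csInf_le hK.bddBelow hz]; linarith [le_csSup hK.bddAbove hz]]

/-- the piece sequence determined by a boolean sequence -/
def pieceSeq (x : ℕ → Bool) : ℕ → Pc K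
  | 0 => root hK hne
  | n+1 => splitPc hK hacc hgap (pieceSeq x n) (x n)

lemma pieceSeq_congr {x y : ℕ → Bool} (n : ℕ) (h : ∀ k, k < n → x k = y k) :
    pieceSeq hK hacc hgap hne x n = pieceSeq hK hacc hgap hne y n := by
  induction n with
  | zero => rfl
  | succ n ih =>
    show splitPc hK hacc hgap _ (x n) = splitPc hK hacc hgap _ (y n)
    rw [ih (fun k hk => h k (by omega)), h n (by omega)]

lemma pieceSeq_anti (x : ℕ → Bool) {n m : ℕ} (hnm : n ≤ m) :
    Q (pieceSeq hK hacc hgap hne x m) ⊆ Q (pieceSeq hK hacc hgap hne x n) := by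
  induction m with
  | zero => simp_all
  | succ m ih =>
    rcases Nat.lt_or_ge n (m+1) with h | h
    · exact (split_sub hK hacc hgap _ _).trans (ih (by omega))
    · have : n = m + 1 := by omega
      subst this
      exact subset_rfl

lemma width_le (x : ℕ → Bool) (n : ℕ) :
    B (pieceSeq hK hacc hgap hne x n) - A (pieceSeq hK hacc hgap hne x n) ≤
      (3/4)^n * (B (root hK hne (K := K)) - A (root hK hne (K := K))) := by
  induction n with
  | zero => simp [pieceSeq]
  | succ n ih =>
    have h1 := split_width hK hacc hgap (pieceSeq hK hacc hgap hne x n) (x n)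
    have h2 : (0:ℝ) ≤ 3/4 := by norm_num
    calc B (pieceSeq hK hacc hgap hne x (n+1)) - A (pieceSeq hK hacc hgap hne x (n+1))
        ≤ 3/4 * (B (pieceSeq hK hacc hgap hne x n) - A (pieceSeq hK hacc hgap hne x n)) := h1
      _ ≤ 3/4 * ((3/4)^n * (B (root hK hne (K := K)) - A (root hK hne (K := K)))) := by
          apply mul_le_mul_of_nonneg_left ih h2
      _ = (3/4)^(n+1) * (B (root hK hne (K := K)) - A (root hK hne (K := K))) := by ring

lemma dist_le_width {P : Pc K} {z w : ℝ} (hz : z ∈ Q P) (hw : w ∈ Q P) :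
    |z - w| ≤ B P - A P := by
  have h1 := A_le hK P hz
  have h2 := le_B hK P hz
  have h3 := A_le hK P hw
  have h4 := le_B hK P hw
  rw [abs_le]
  constructor <;> linarith

end Cantor
namespace Cantor

open Filter Set

variable {K : Set ℝ}
variable (hK : IsCompact K)
  (hacc : ∀ x ∈ K, ∀ ε > 0, ∃ y ∈ K, y ≠ x ∧ |y - x| < ε)
  (hgap : ∀ a b : ℝ, a < b → ∃ c, a < c ∧ c < b ∧ c ∉ K)
  (hne : K.Nonempty)

include hK hacc hgap hne

lemma exists_phi (x : ℕ → Bool) :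
    ∃ z : ℝ, ∀ n, z ∈ Q (pieceSeq hK hacc hgap hne x n) := by
  set W : ℝ := B (root hK hne (K := K)) - A (root hK hne (K := K)) with hW
  set f : ℕ → ℝ := fun n => A (pieceSeq hK hacc hgap hne x n) with hf
  have hfQ : ∀ n, f n ∈ Q (pieceSeq hK hacc hgap hne x n) := fun n => A_mem hK _
  have hcauchy : CauchySeq f := by
    apply cauchySeq_of_le_geometric (3/4) W (by norm_num)
    intro n
    have h1 : f (n+1) ∈ Q (pieceSeq hK hacc hgap hne x n) :=
      pieceSeq_anti hK hacc hgap hne x (Nat.le_succ n) (hfQ (n+1))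
    have h2 := dist_le_width hK hacc hgap hne h1 (hfQ n)
    have h3 := width_le hK hacc hgap hne x n
    rw [Real.dist_eq]
    calc |f n - f (n+1)| = |f (n+1) - f n| := abs_sub_comm _ _
      _ ≤ B (pieceSeq hK hacc hgap hne x n) - A (pieceSeq hK hacc hgap hne x n) := h2
      _ ≤ (3/4)^n * W := h3
      _ = W * (3/4)^n := by ring
  obtain ⟨z, hz⟩ := cauchySeq_tendsto_of_complete hcauchy
  refine ⟨z, fun n => ?_⟩
  apply (Qcompact hK _).isClosed.mem_of_tendsto hz
  filter_upwards [eventually_ge_atTop n] with m hm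
  exact pieceSeq_anti hK hacc hgap hne x hm (hfQ m)

/-- the coding map -/
def phi (x : ℕ → Bool) : ℝ := (exists_phi hK hacc hgap hne x).choose

lemma phi_mem (x : ℕ → Bool) (n : ℕ) :
    phi hK hacc hgap hne x ∈ Q (pieceSeq hK hacc hgap hne x n) :=
  (exists_phi hK hacc hgap hne x).choose_spec n

lemma phi_mem_K (x : ℕ → Bool) : phi hK hacc hgap hne x ∈ K :=
  (Qsub hK _) (phi_mem hK hacc hgap hne x 0)

lemma tendsto_w : Tendsto (fun n : ℕ => (3/4:ℝ)^n * (B (root hK hne (K := K)) - A (root hK hne (K := K))))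
    atTop (nhds 0) := by
  rw [show (0:ℝ) = 0 * (B (root hK hne (K := K)) - A (root hK hne (K := K))) by ring]
  exact (tendsto_pow_atTop_nhds_zero_of_lt_one (by norm_num) (by norm_num)).mul_const _

lemma phi_eq_of_forall_mem {x : ℕ → Bool} {z : ℝ}
    (hz : ∀ n, z ∈ Q (pieceSeq hK hacc hgap hne x n)) : phi hK hacc hgap hne x = z := by
  have key : ∀ n, |phi hK hacc hgap hne x - z| ≤
      (3/4)^n * (B (root hK hne (K := K)) - A (root hK hne (K := K))) := by
    intro n
    exact le_trans (dist_le_width hK hacc hgap hne (phi_mem hK hacc hgap hne x n) (hz n))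
      (width_le hK hacc hgap hne x n)
  have h0 : |phi hK hacc hgap hne x - z| ≤ 0 :=
    ge_of_tendsto (tendsto_w hK hacc hgap hne) (Eventually.of_forall key)
  have := abs_nonneg (phi hK hacc hgap hne x - z)
  have : |phi hK hacc hgap hne x - z| = 0 := le_antisymm h0 this
  rw [abs_eq_zero, sub_eq_zero] at this
  exact this

lemma phi_injective : Function.Injective (phi hK hacc hgap hne) := by
  intro x y hxy
  by_contra hne'
  have hex : ∃ n, x n ≠ y n := by
    by_contra hno
    push_neg at hno
    exact hne' (funext hno)
  set n := Nat.find hex with hn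
  have hdiff : x n ≠ y n := Nat.find_spec hex
  have hpre : ∀ k, k < n → x k = y k := by
    intro k hk
    by_contra hne''
    exact absurd (Nat.find_le hne'' : n ≤ k) (by omega)
  have hP : pieceSeq hK hacc hgap hne x n = pieceSeq hK hacc hgap hne y n :=
    pieceSeq_congr hK hacc hgap hne n hpre
  have hx1 : phi hK hacc hgap hne x ∈ Q (splitPc hK hacc hgap (pieceSeq hK hacc hgap hne x n) (x n)) :=
    phi_mem hK hacc hgap hne x (n+1)
  have hy1 : phi hK hacc hgap hne y ∈ Q (splitPc hK hacc hgap (pieceSeq hK hacc hgap hne x n) (y n)) := by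
    have := phi_mem hK hacc hgap hne y (n+1)
    show _ ∈ Q (splitPc hK hacc hgap _ (y n))
    rw [hP]
    exact this
  rw [hxy] at hx1
  cases hxb : x n <;> cases hyb : y n
  · exact hdiff (hxb ▸ hyb ▸ rfl)
  · rw [hxb] at hx1; rw [hyb] at hy1
    exact split_disj hK hacc hgap _ hx1 hy1
  · rw [hxb] at hx1; rw [hyb] at hy1
    exact split_disj hK hacc hgap _ hy1 hx1
  · exact hdiff (hxb ▸ hyb ▸ rfl)

open Classical in
/-- the inverse coding: pieces chosen to contain z -/
noncomputable def zseq (z : ℝ) : ℕ → Pc K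
  | 0 => root hK hne
  | n+1 =>
    splitPc hK hacc hgap (zseq z n)
      (if z ∈ Q (splitPc hK hacc hgap (zseq z n) false) then false else true)

open Classical in
noncomputable def zbits (z : ℝ) : ℕ → Bool := fun n =>
  if z ∈ Q (splitPc hK hacc hgap (zseq hK hacc hgap hne z n) false) then false else true

lemma zseq_eq_pieceSeq (z : ℝ) (n : ℕ) :
    pieceSeq hK hacc hgap hne (zbits hK hacc hgap hne z) n = zseq hK hacc hgap hne z n := by
  induction n with
  | zero => rfl
  | succ n ih =>
    show splitPc hK hacc hgap _ _ = _
    rw [ih]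
    rfl

lemma zseq_mem {z : ℝ} (hz : z ∈ K) (n : ℕ) : z ∈ Q (zseq hK hacc hgap hne z n) := by
  induction n with
  | zero => exact root_mem hK hacc hgap hne hz
  | succ n ih =>
    show z ∈ Q (splitPc hK hacc hgap (zseq hK hacc hgap hne z n) _)
    rcases split_union hK hacc hgap _ ih with h | h
    · rw [if_pos h]; exact h
    · by_cases hmem : z ∈ Q (splitPc hK hacc hgap (zseq hK hacc hgap hne z n) false)
      · rw [if_pos hmem]; exact hmem
      · rw [if_neg hmem]; exact h

lemma phi_surjective {z : ℝ} (hz : z ∈ K) : ∃ x, phi hK hacc hgap hne x = z := by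
  refine ⟨zbits hK hacc hgap hne z, ?_⟩
  apply phi_eq_of_forall_mem
  intro n
  rw [zseq_eq_pieceSeq]
  exact zseq_mem hK hacc hgap hne hz n

lemma phi_continuous : Continuous (phi hK hacc hgap hne) := by
  rw [continuous_iff_continuousAt]
  intro x
  rw [ContinuousAt, Metric.tendsto_nhds]
  intro ε hε
  obtain ⟨n, hn⟩ : ∃ n, (3/4:ℝ)^n * (B (root hK hne (K := K)) - A (root hK hne (K := K))) < ε := by
    have := tendsto_w hK hacc hgap hne
    rw [Metric.tendsto_nhds] at this
    have h2 := this ε hε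
    obtain ⟨n, hn⟩ := h2.exists
    rw [Real.dist_eq, sub_zero] at hn
    refine ⟨n, lt_of_le_of_lt (le_abs_self _) hn⟩
  have hU : IsOpen {y : ℕ → Bool | ∀ k : Fin n, y k = x k} := by
    have heq : {y : ℕ → Bool | ∀ k : Fin n, y k = x k}
        = ⋂ k : Fin n, (fun y : ℕ → Bool => y k) ⁻¹' {x k} := by
      ext y; simp
    rw [heq]
    exact isOpen_iInter_of_finite fun k =>
      (continuous_apply (k:ℕ)).isOpen_preimage _ (isOpen_discrete _)
  have hxU : x ∈ {y : ℕ → Bool | ∀ k : Fin n, y k = x k} := fun k => rfl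
  filter_upwards [hU.mem_nhds hxU] with y hy
  have hP : pieceSeq hK hacc hgap hne y n = pieceSeq hK hacc hgap hne x n :=
    pieceSeq_congr hK hacc hgap hne n (fun k hk => hy ⟨k, hk⟩)
  have h1 := phi_mem hK hacc hgap hne y n
  rw [hP] at h1
  have h2 := phi_mem hK hacc hgap hne x n
  rw [Real.dist_eq]
  exact lt_of_le_of_lt (le_trans (dist_le_width hK hacc hgap hne h1 h2) (width_le hK hacc hgap hne x n)) hn

/-- The abstract Cantor-set recognition theorem, for compact subsets of ℝ . -/
theorem cantor_homeo : Nonempty (↥K ≃ₜ (ℕ → Bool)) := by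
  have hbij : Function.Bijective (fun x : ℕ → Bool => (⟨phi hK hacc hgap hne x, phi_mem_K hK hacc hgap hne x⟩ : ↥K)) := by
    constructor
    · intro x y hxy
      exact phi_injective hK hacc hgap hne (congrArg Subtype.val hxy)
    · rintro ⟨z, hz⟩
      obtain ⟨x, hx⟩ := phi_surjective hK hacc hgap hne hz
      exact ⟨x, Subtype.ext hx⟩
  set e := Equiv.ofBijective _ hbij with he
  have hcont : Continuous e := by
    rw [he]
    exact Continuous.subtype_mk (phi_continuous hK hacc hgap hne) _
  exact ⟨(hcont.homeoOfEquivCompactToT2).symm⟩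

end Cantor
namespace SC
open Filter

variable {p : ℕ}

/-- every element of [0,1] has a base-p expansion -/
lemma exists_expansion (hp : 3 ≤ p) {x : ℝ} (hx0 : 0 ≤ x) (hx1 : x ≤ 1) :
    ∃ a : ℕ → ℕ, (∀ k, a k < p) ∧ x = val p a := by
  have hq := one_lt_q hp
  have hppos := q_pos hp
  rcases eq_or_lt_of_le hx1 with rfl | hx1
  · exact ⟨fun _ => p - 1, fun _ => Nat.sub_lt (by omega) one_pos, (val_const_max hp).symm⟩
  · -- x < 1 case : digits via floors
    set L : ℕ → ℤ := fun k => ⌊x * (p:ℝ)^k⌋ with hL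
    have hL0 : ∀ k, 0 ≤ L k := fun k => Int.floor_nonneg.mpr (by positivity)
    have hLfl : ∀ k, (L k : ℝ) ≤ x * (p:ℝ)^k := fun k => Int.floor_le _
    have hLfl' : ∀ k, x * (p:ℝ)^k < (L k : ℝ) + 1 := fun k => Int.lt_floor_add_one _
    have hkey : ∀ k, (p:ℤ) * L k ≤ L (k+1) ∧ L (k+1) < (p:ℤ) * L k + p := by
      intro k
      constructor
      · apply Int.le_floor.mpr
        push_cast
        calc ((p:ℝ)) * (L k : ℝ) ≤ (p:ℝ) * (x * (p:ℝ)^k) := by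
              apply mul_le_mul_of_nonneg_left (hLfl k) (by positivity)
          _ = x * (p:ℝ)^(k+1) := by ring
      · apply Int.floor_lt.mpr
        push_cast
        calc x * (p:ℝ)^(k+1) = (p:ℝ) * (x * (p:ℝ)^k) := by ring
          _ < (p:ℝ) * ((L k : ℝ) + 1) := by
              apply mul_lt_mul_of_pos_left (hLfl' k) (by positivity)
          _ = (p:ℝ) * (L k:ℝ) + p := by ring
    set a : ℕ → ℕ := fun k => (L (k+1) - p * L k).toNat with ha
    have hacast : ∀ k, ((a k : ℕ) : ℝ) = (L (k+1) : ℝ) - (p:ℝ) * (L k : ℝ) := by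
      intro k
      have h1 := (hkey k).1
      have h2 : ((a k : ℕ) : ℤ) = L (k+1) - p * L k := by
        rw [ha]; exact Int.toNat_of_nonneg (by omega)
      exact_mod_cast h2
    have hadig : ∀ k, a k < p := by
      intro k
      have h1 := (hkey k).1
      have h2 := (hkey k).2
      show (L (k+1) - p * L k).toNat < p
      omega
    have hL0' : L 0 = 0 := by
      rw [hL]
      simp only [pow_zero, mul_one]
      rw [Int.floor_eq_zero_iff]
      constructor <;> simp [hx0, hx1] <;> linarith
    have hpartial : ∀ n, (∑ i ∈ Finset.range n, (a i : ℝ) / (p:ℝ)^(i+1)) = (L n : ℝ) / (p:ℝ)^n := by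
      intro n
      induction n with
      | zero => simp [hL0']
      | succ n ih =>
        rw [Finset.sum_range_succ, ih, hacast n]
        have h1 : (p:ℝ)^(n+1) = (p:ℝ)^n * p := pow_succ _ _
        field_simp
        ring
    have hsum : Summable (fun k : ℕ => (a k : ℝ) / (p:ℝ)^(k+1)) := summable_digits hp hadig
    refine ⟨a, hadig, ?_⟩
    have hhs : HasSum (fun k : ℕ => (a k : ℝ) / (p:ℝ)^(k+1)) x := by
      rw [hsum.hasSum_iff_tendsto_nat]
      have hupper : ∀ n, (L n : ℝ) / (p:ℝ)^n ≤ x := by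
        intro n
        rw [div_le_iff₀ (by positivity)]
        linarith [hLfl n, mul_comm x ((p:ℝ)^n)]
      have hlower : ∀ n, x - ((p:ℝ)⁻¹)^n ≤ (L n : ℝ) / (p:ℝ)^n := by
        intro n
        rw [sub_le_iff_le_add, div_add' _ _ _ (by positivity : ((p:ℝ)^n) ≠ 0)]
        rw [le_div_iff₀ (by positivity)]
        have := hLfl' n
        have hinv : ((p:ℝ)⁻¹)^n * (p:ℝ)^n = 1 := by
          rw [← mul_pow]
          simp [inv_mul_cancel₀ (q_ne hp)]
        nlinarith [hLfl' n]
      have htend : Tendsto (fun n : ℕ => x - ((p:ℝ)⁻¹)^n) atTop (nhds x) := by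
        rw [show nhds x = nhds (x - 0) by norm_num]
        apply Tendsto.const_sub
        apply tendsto_pow_atTop_nhds_zero_of_lt_one (by positivity)
        rw [inv_lt_one_iff₀]; right; exact hq
      have hfn : (fun n : ℕ => ∑ i ∈ Finset.range n, (a i : ℝ) / (p:ℝ)^(i+1))
          = fun n => (L n : ℝ) / (p:ℝ)^n := funext hpartial
      rw [hfn]
      exact tendsto_of_tendsto_of_tendsto_of_le_of_le htend tendsto_const_nhds hlower hupper
    rw [← hhs.tsum_eq]
    rfl
end SC


namespace SC

variable {p : ℕ}

lemma val_zero : val p (fun _ => 0) = 0 := by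
  unfold val; simp

lemma spPair_comm {x y : ℝ} (h : SpPair p x y) : SpPair p y x := by
  obtain ⟨a, b, hd, hx, hy⟩ := h
  exact ⟨b, a, fun k => ⟨(hd k).2.1, (hd k).1, fun ⟨h1, h2⟩ => (hd k).2.2 ⟨h2, h1⟩⟩, hy, hx⟩

lemma obd_subset_sp (hp : 3 ≤ p) : Obd ⊆ Sp p := by
  have hm1 := m_pos hp
  have hmlt : (p-1)/2 < p - 1 := by omega
  rintro ⟨x, y⟩ ⟨⟨⟨hx0, hx1⟩, ⟨hy0, hy1⟩⟩, hside⟩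
  simp only at hx0 hx1 hy0 hy1 hside
  have hexp : ∀ t : ℝ, 0 ≤ t → t ≤ 1 → ∃ a : ℕ → ℕ, (∀ k, a k < p) ∧ t = val p a :=
    fun t h0 h1 => exists_expansion hp h0 h1
  -- helper to build membership given one constant coordinate
  have hzero : ∀ k : ℕ, (fun _ : ℕ => 0) k < p ∧ (fun _ : ℕ => 0) k ≠ (p-1)/2 := by
    intro k
    constructor
    · show 0 < p; omega
    · show (0:ℕ) ≠ (p-1)/2; omega
  have hmax : ∀ k : ℕ, (fun _ : ℕ => p - 1) k < p ∧ (fun _ : ℕ => p - 1) k ≠ (p-1)/2 := by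
    intro k
    constructor
    · show p - 1 < p; omega
    · show p - 1 ≠ (p-1)/2; omega
  rcases hside with h | h | h | h
  · -- x = 0
    obtain ⟨b, hb, hbe⟩ := hexp y hy0 hy1
    refine ⟨fun _ => 0, b, fun k => ⟨(hzero k).1, hb k, fun ⟨h1, _⟩ => (hzero k).2 h1⟩, ?_, hbe⟩
    show x = val p (fun _ => 0)
    rw [val_zero, h]
  · obtain ⟨b, hb, hbe⟩ := hexp y hy0 hy1
    refine ⟨fun _ => p - 1, b, fun k => ⟨(hmax k).1, hb k, fun ⟨h1, _⟩ => (hmax k).2 h1⟩, ?_, hbe⟩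
    show x = val p (fun _ => p - 1)
    rw [val_const_max hp, h]
  · obtain ⟨a, hb, hbe⟩ := hexp x hx0 hx1
    refine ⟨a, fun _ => 0, fun k => ⟨hb k, (hzero k).1, fun ⟨_, h2⟩ => (hzero k).2 h2⟩, hbe, ?_⟩
    show y = val p (fun _ => 0)
    rw [val_zero, h]
  · obtain ⟨a, hb, hbe⟩ := hexp x hx0 hx1
    refine ⟨a, fun _ => p - 1, fun k => ⟨hb k, (hmax k).1, fun ⟨_, h2⟩ => (hmax k).2 h2⟩, hbe, ?_⟩
    show y = val p (fun _ => p - 1)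
    rw [val_const_max hp, h]

lemma sp_diag (hp : 3 ≤ p) (hodd : Odd p) {x : ℝ} : SpPair p x x ↔ x ∈ Kc p := by
  constructor
  · rintro ⟨a, b, hd, hx1, hx2⟩
    change x = val p a at hx1
    change x = val p b at hx2
    have h : val p a = val p b := by rw [← hx1, ← hx2]
    have := pairK hp hodd hd h
    rwa [← hx1] at this
  · rintro ⟨c, hc, rfl⟩
    exact ⟨c, c, fun k => ⟨(hc k).1, (hc k).1, fun ⟨h1, _⟩ => (hc k).2 h1⟩, rfl, rfl⟩

lemma sp_anti (hp : 3 ≤ p) (hodd : Odd p) {x : ℝ} : SpPair p x (1 - x) ↔ x ∈ Kc p := by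
  have hmm : 2 * ((p-1)/2) = p - 1 := by obtain ⟨r, hr⟩ := hodd; omega
  constructor
  · rintro ⟨a, b, hd, hx1, hx2⟩
    change x = val p a at hx1
    change 1 - x = val p b at hx2
    have hbd : ∀ k, b k < p := fun k => (hd k).2.1
    have hb' : val p (fun k => p - 1 - b k) = 1 - val p b := val_compl hp hbd
    have hx : val p a = val p (fun k => p - 1 - b k) := by
      rw [hb', ← hx2, ← hx1]; ring
    have hd' : ∀ k, a k < p ∧ (fun k => p - 1 - b k) k < p ∧
        ¬(a k = (p-1)/2 ∧ (fun k => p - 1 - b k) k = (p-1)/2) := by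
      intro k
      refine ⟨(hd k).1, by show p - 1 - b k < p; omega, ?_⟩
      rintro ⟨h1, h2⟩
      apply (hd k).2.2
      refine ⟨h1, ?_⟩
      have h3 : b k ≤ p - 1 := by have := hbd k; omega
      have h2' : p - 1 - b k = (p-1)/2 := h2
      show b k = (p-1)/2
      omega
    have := pairK hp hodd hd' hx
    rwa [← hx1] at this
  · rintro ⟨c, hc, rfl⟩
    have hcd : ∀ k, c k < p := fun k => (hc k).1
    refine ⟨c, fun k => p - 1 - c k, ?_, rfl, (val_compl hp hcd).symm⟩
    intro k
    exact ⟨hcd k, by show p - 1 - c k < p; omega, fun ⟨h1, _⟩ => (hc k).2 h1⟩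

lemma sp_half_left (hp : 3 ≤ p) (hodd : Odd p) {y : ℝ} :
    SpPair p (1/2) y ↔ y ∈ Kc p := by
  constructor
  · rintro ⟨a, b, hd, hx1, hy1⟩
    change (1:ℝ)/2 = val p a at hx1
    change y = val p b at hy1
    have had : ∀ k, a k < p := fun k => (hd k).1
    have := half_val hp hodd had hx1.symm
    refine ⟨b, fun k => ⟨(hd k).2.1, fun hbk => (hd k).2.2 ⟨this k, hbk⟩⟩, hy1⟩
  · rintro ⟨c, hc, rfl⟩
    have hm := m_lt hp
    refine ⟨fun _ => (p-1)/2, c, ?_, (val_half hp hodd).symm, rfl⟩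
    intro k
    exact ⟨hm, (hc k).1, fun ⟨_, h2⟩ => (hc k).2 h2⟩

lemma sp_half_right (hp : 3 ≤ p) (hodd : Odd p) {x : ℝ} :
    SpPair p x (1/2) ↔ x ∈ Kc p := by
  constructor
  · intro h
    exact (sp_half_left hp hodd).mp (spPair_comm h)
  · intro h
    exact spPair_comm ((sp_half_left hp hodd).mpr h)

end SC


namespace JC

open Set Metric

abbrev E2 := EuclideanSpace ℝ (Fin 2)

noncomputable def mk2 (a b : ℝ) : E2 := (WithLp.equiv 2 (Fin 2 → ℝ)).symm ![a, b]

@[simp] lemma mk2_zero (a b : ℝ) : mk2 a b 0 = a := by simp [mk2]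
@[simp] lemma mk2_one (a b : ℝ) : mk2 a b 1 = b := by simp [mk2]

abbrev Sph : Set E2 := Metric.sphere (0 : E2) 1

lemma mem_Sph_iff (v : E2) : v ∈ Sph ↔ v 0^2 + v 1^2 = 1 := by
  rw [mem_sphere_zero_iff_norm, EuclideanSpace.norm_eq, Real.sqrt_eq_one]
  simp [Fin.sum_univ_two, Real.norm_eq_abs, sq_abs]

lemma e2_ext {v w : E2} (h0 : v 0 = w 0) (h1 : v 1 = w 1) : v = w := by
  ext i; fin_cases i <;> assumption

lemma cont_coord (i : Fin 2) : Continuous (fun v : E2 => v i) :=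
  (EuclideanSpace.proj (i : Fin 2) : E2 →L[ℝ] ℝ).continuous

lemma cont_mk2 {α : Type*} [TopologicalSpace α] {f g : α → ℝ} (hf : Continuous f)
    (hg : Continuous g) : Continuous (fun t => mk2 (f t) (g t)) := by
  unfold mk2
  apply Continuous.comp (PiLp.continuous_toLp _ _)
  apply continuous_pi
  intro i
  fin_cases i <;> simpa

def Ffun (q x : E2) : ℝ := (x 0 * q 1 - x 1 * q 0) / (1 - (x 0 * q 0 + x 1 * q 1))

lemma inner_lt_one {x q : E2} (hx : x 0^2 + x 1^2 = 1) (hq : q 0^2 + q 1^2 = 1)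
    (hne : x ≠ q) : x 0 * q 0 + x 1 * q 1 < 1 := by
  have key : 2*(1 - (x 0 * q 0 + x 1 * q 1)) = (x 0 - q 0)^2 + (x 1 - q 1)^2 := by
    linear_combination -hx - hq
  by_contra hge
  push_neg at hge
  have h1 : (x 0 - q 0)^2 + (x 1 - q 1)^2 ≤ 0 := by linarith
  have h2 : x 0 = q 0 := by nlinarith [sq_nonneg (x 0 - q 0), sq_nonneg (x 1 - q 1)]
  have h3 : x 1 = q 1 := by nlinarith [sq_nonneg (x 0 - q 0), sq_nonneg (x 1 - q 1)]
  exact hne (e2_ext h2 h3)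

lemma lagrange {x q : E2} (hx : x 0^2 + x 1^2 = 1) (hq : q 0^2 + q 1^2 = 1) :
    (x 0 * q 1 - x 1 * q 0)^2 + (x 0 * q 0 + x 1 * q 1)^2 = 1 := by
  linear_combination (q 0 ^ 2 + q 1 ^ 2) * hx + hq

lemma coord0_formula {x q : E2} (hq : q 0^2 + q 1^2 = 1) :
    x 0 = (x 0 * q 0 + x 1 * q 1) * q 0 + (x 0 * q 1 - x 1 * q 0) * q 1 := by
  linear_combination x 0 * hq.symm

lemma coord1_formula {x q : E2} (hq : q 0^2 + q 1^2 = 1) :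
    x 1 = (x 0 * q 0 + x 1 * q 1) * q 1 - (x 0 * q 1 - x 1 * q 0) * q 0 := by
  linear_combination x 1 * hq.symm

lemma Ffun_inj {q x y : E2} (hq : q 0^2 + q 1^2 = 1) (hx : x 0^2 + x 1^2 = 1)
    (hy : y 0^2 + y 1^2 = 1) (hnex : x ≠ q) (hney : y ≠ q)
    (h : Ffun q x = Ffun q y) : x = y := by
  set ax := x 0 * q 0 + x 1 * q 1 with hax
  set cx := x 0 * q 1 - x 1 * q 0 with hcx
  set ay := y 0 * q 0 + y 1 * q 1 with hay
  set cy := y 0 * q 1 - y 1 * q 0 with hcy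
  have hsx : 0 < 1 - ax := by have := inner_lt_one hx hq hnex; linarith
  have hsy : 0 < 1 - ay := by have := inner_lt_one hy hq hney; linarith
  set t := Ffun q x with ht
  have hFx : t = cx / (1 - ax) := rfl
  have hFy : Ffun q y = cy / (1 - ay) := rfl
  have htx : cx = t * (1 - ax) := by
    rw [hFx]; field_simp
  have hty : cy = t * (1 - ay) := by
    rw [h, hFy]; field_simp
  have hlx : cx^2 + ax^2 = 1 := lagrange hx hq
  have hly : cy^2 + ay^2 = 1 := lagrange hy hq
  have hqx : t^2 * (1 - ax) = 1 + ax := by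
    have h2 : t^2 * (1-ax)^2 = (1-ax)*(1+ax) := by
      calc t^2*(1-ax)^2 = cx^2 := by rw [htx]; ring
        _ = (1-ax)*(1+ax) := by linear_combination hlx
    have h3 : (t^2*(1-ax) - (1+ax)) * (1-ax) = 0 := by linear_combination h2
    rcases mul_eq_zero.mp h3 with h4 | h4
    · linarith
    · exact absurd h4 hsx.ne'
  have hqy : t^2 * (1 - ay) = 1 + ay := by
    have h2 : t^2 * (1-ay)^2 = (1-ay)*(1+ay) := by
      calc t^2*(1-ay)^2 = cy^2 := by rw [hty]; ring
        _ = (1-ay)*(1+ay) := by linear_combination hly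
    have h3 : (t^2*(1-ay) - (1+ay)) * (1-ay) = 0 := by linear_combination h2
    rcases mul_eq_zero.mp h3 with h4 | h4
    · linarith
    · exact absurd h4 hsy.ne'
  have haxy : ax = ay := by
    have h3 : (ax - ay) * (t^2 + 1) = 0 := by linear_combination hqy - hqx
    have h4 : (0:ℝ) < t^2 + 1 := by positivity
    rcases mul_eq_zero.mp h3 with h5 | h5
    · linarith
    · exact absurd h5 h4.ne'
  have hcxy : cx = cy := by rw [htx, hty, haxy]
  have h0 : x 0 = y 0 := by
    rw [coord0_formula (x := x) hq, coord0_formula (x := y) hq, ← hax, ← hcx, ← hay, ← hcy,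
      haxy, hcxy]
  have h1 : x 1 = y 1 := by
    rw [coord1_formula (x := x) hq, coord1_formula (x := y) hq, ← hax, ← hcx, ← hay, ← hcy,
      haxy, hcxy]
  exact e2_ext h0 h1

noncomputable def rho (q : E2) (t : ℝ) : E2 :=
  mk2 (((t^2-1)/(t^2+1)) * q 0 + (2*t/(t^2+1)) * q 1)
      (((t^2-1)/(t^2+1)) * q 1 - (2*t/(t^2+1)) * q 0)

lemma rho_unit {q : E2} (hq : q 0^2 + q 1^2 = 1) (t : ℝ) :
    (rho q t) 0^2 + (rho q t) 1^2 = 1 := by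
  have hden : (t^2+1:ℝ) ≠ 0 := by positivity
  simp only [rho, mk2_zero, mk2_one]
  field_simp
  linear_combination ((t^2-1)^2 + 4*t^2) * hq

lemma rho_a {q : E2} (hq : q 0^2 + q 1^2 = 1) (t : ℝ) :
    (rho q t) 0 * q 0 + (rho q t) 1 * q 1 = (t^2-1)/(t^2+1) := by
  have hden : (t^2+1:ℝ) ≠ 0 := by positivity
  simp only [rho, mk2_zero, mk2_one]
  field_simp
  linear_combination (t^2-1) * hq

lemma rho_c {q : E2} (hq : q 0^2 + q 1^2 = 1) (t : ℝ) :
    (rho q t) 0 * q 1 - (rho q t) 1 * q 0 = 2*t/(t^2+1) := by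
  have hden : (t^2+1:ℝ) ≠ 0 := by positivity
  simp only [rho, mk2_zero, mk2_one]
  field_simp
  linear_combination 2*t * hq

lemma rho_ne {q : E2} (hq : q 0^2 + q 1^2 = 1) (t : ℝ) : rho q t ≠ q := by
  intro h
  have h2 := rho_a hq t
  rw [h] at h2
  have h1 : q 0 * q 0 + q 1 * q 1 = 1 := by nlinarith [hq]
  rw [h1] at h2
  have hden : (0:ℝ) < t^2+1 := by positivity
  rw [eq_comm, div_eq_iff hden.ne'] at h2
  nlinarith

lemma rho_F {q : E2} (hq : q 0^2 + q 1^2 = 1) (t : ℝ) : Ffun q (rho q t) = t := by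
  have hden : (t^2+1:ℝ) ≠ 0 := by positivity
  rw [Ffun, rho_c hq, rho_a hq]
  rw [show 1 - (t^2-1)/(t^2+1) = 2/(t^2+1) by field_simp; ring]
  rw [div_div_div_comm]
  field_simp

lemma aux_t (a c : ℝ) (hs : 0 < 1 - a) (hc2 : c^2 = (1-a)*(1+a)) :
    ((c/(1-a))^2 - 1)/((c/(1-a))^2+1) = a ∧ 2*(c/(1-a))/((c/(1-a))^2+1) = c := by
  have hne : 1 - a ≠ 0 := hs.ne'
  have ht2 : (c/(1-a))^2 + 1 = 2/(1-a) := by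
    field_simp
    linear_combination hc2
  constructor
  · rw [ht2]
    field_simp
    linear_combination hc2
  · rw [ht2]
    field_simp

lemma rho_surj {q : E2} (hq : q 0^2 + q 1^2 = 1) {x : E2} (hx : x 0^2 + x 1^2 = 1)
    (hne : x ≠ q) : ∃ t, rho q t = x := by
  have hs : 0 < 1 - (x 0 * q 0 + x 1 * q 1) := by
    have := inner_lt_one hx hq hne; linarith
  have hlag := lagrange hx hq
  have hc2 : (x 0 * q 1 - x 1 * q 0)^2
      = (1-(x 0 * q 0 + x 1 * q 1))*(1+(x 0 * q 0 + x 1 * q 1)) := by nlinarith [hlag]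
  obtain ⟨hA, hC⟩ := aux_t (x 0 * q 0 + x 1 * q 1) (x 0 * q 1 - x 1 * q 0) hs hc2
  refine ⟨(x 0 * q 1 - x 1 * q 0) / (1 - (x 0 * q 0 + x 1 * q 1)), e2_ext ?_ ?_⟩
  · simp only [rho, mk2_zero]
    rw [hA, hC]
    exact (coord0_formula hq).symm
  · simp only [rho, mk2_one]
    rw [hA, hC]
    exact (coord1_formula hq).symm

lemma cont_rho (q : E2) : Continuous (rho q) := by
  have hden : ∀ t : ℝ, (t^2+1:ℝ) ≠ 0 := fun t => by positivity
  have c1 : Continuous fun t : ℝ => (t^2-1)/(t^2+1) :=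
    Continuous.div (by continuity) (by continuity) hden
  have c2 : Continuous fun t : ℝ => 2*t/(t^2+1) :=
    Continuous.div (by continuity) (by continuity) hden
  exact cont_mk2 ((c1.mul continuous_const).add (c2.mul continuous_const))
    ((c1.mul continuous_const).sub (c2.mul continuous_const))

end JC


namespace JC

open Set Metric

lemma unit_of_mem {v : E2} (hv : v ∈ Sph) : v 0^2 + v 1^2 = 1 := (mem_Sph_iff v).mp hv

noncomputable def rho' (q : ↥Sph) (t : ℝ) : ↥Sph :=
  ⟨rho q.1 t, (mem_Sph_iff _).mpr (rho_unit (unit_of_mem q.2) t)⟩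

lemma cont_rho' (q : ↥Sph) : Continuous (rho' q) :=
  (cont_rho q.1).subtype_mk _

lemma range_rho' (q : ↥Sph) : Set.range (rho' q) = {y : ↥Sph | y ≠ q} := by
  ext y
  constructor
  · rintro ⟨t, rfl⟩
    intro hcon
    exact rho_ne (unit_of_mem q.2) t (congrArg Subtype.val hcon)
  · intro hy
    have hvy : y.1 ≠ q.1 := fun hc => hy (Subtype.ext hc)
    obtain ⟨t, ht⟩ := rho_surj (unit_of_mem q.2) (unit_of_mem y.2) hvy
    exact ⟨t, Subtype.ext ht⟩

lemma isConnected_compl (q : ↥Sph) : IsConnected {y : ↥Sph | y ≠ q} := by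
  rw [← range_rho' q]
  exact isConnected_range (cont_rho' q)

noncomputable def pt1 : ↥Sph := ⟨mk2 1 0, (mem_Sph_iff _).mpr (by simp)⟩
noncomputable def pt2 : ↥Sph := ⟨mk2 (-1) 0, (mem_Sph_iff _).mpr (by norm_num)⟩
noncomputable def pt3 : ↥Sph := ⟨mk2 0 1, (mem_Sph_iff _).mpr (by simp)⟩

lemma pt1_ne_pt2 : pt1 ≠ pt2 := by
  intro h
  have := congrArg (fun z : ↥Sph => z.1 0) h
  simp [pt1, pt2] at this
  norm_num at this

lemma pt3_ne_pt1 : pt3 ≠ pt1 := by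
  intro h
  have := congrArg (fun z : ↥Sph => z.1 0) h
  simp [pt1, pt3] at this

lemma pt3_ne_pt2 : pt3 ≠ pt2 := by
  intro h
  have := congrArg (fun z : ↥Sph => z.1 0) h
  simp [pt2, pt3] at this

instance connSph : ConnectedSpace ↥Sph := by
  rw [connectedSpace_iff_univ]
  have hcover : (univ : Set ↥Sph) = {y | y ≠ pt1} ∪ {y | y ≠ pt2} := by
    ext y
    simp only [mem_univ, mem_union, mem_setOf_eq, true_iff]
    by_contra hcon
    push_neg at hcon
    exact pt1_ne_pt2 (hcon.1 ▸ hcon.2 ▸ rfl)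
  rw [hcover]
  exact (isConnected_compl pt1).union ⟨pt3, pt3_ne_pt1, pt3_ne_pt2⟩ (isConnected_compl pt2)

instance nonemptySph : Nonempty ↥Sph := ⟨pt1⟩

instance infiniteSph : Infinite ↥Sph := by
  apply Infinite.of_injective (rho' pt1)
  intro s t hst
  have h1 : rho pt1.1 s = rho pt1.1 t := congrArg Subtype.val hst
  have h2 := rho_F (unit_of_mem pt1.2) s
  rw [h1, rho_F (unit_of_mem pt1.2)] at h2
  exact h2.symm

lemma no_inj_circle_real (G : ↥Sph → ℝ) (hG : Continuous G)
    (hinj : Function.Injective G) : False := by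
  have hGne : G pt1 ≠ G pt2 := fun h => pt1_ne_pt2 (hinj h)
  -- get ordered pair
  obtain ⟨u, v, huv⟩ : ∃ u v : ↥Sph, G u < G v := by
    rcases lt_or_gt_of_ne hGne with h | h
    · exact ⟨pt1, pt2, h⟩
    · exact ⟨pt2, pt1, h⟩
  set γ := (G u + G v)/2 with hγ
  have hγu : G u < γ := by rw [hγ]; linarith
  have hγv : γ < G v := by rw [hγ]; linarith
  have hpre : IsPreconnected (Set.range G) := isPreconnected_range hG
  have hγr : γ ∈ Set.range G :=
    hpre.Icc_subset (Set.mem_range_self u) (Set.mem_range_self v) ⟨hγu.le, hγv.le⟩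
  obtain ⟨x, hx⟩ := hγr
  have hux : u ≠ x := fun h => by rw [h, hx] at hγu; exact lt_irrefl _ hγu
  have hvx : v ≠ x := fun h => by rw [h, hx] at hγv; exact lt_irrefl _ hγv
  have hconnA := isConnected_compl x
  have himg : IsPreconnected (G '' {y : ↥Sph | y ≠ x}) :=
    hconnA.isPreconnected.image G hG.continuousOn
  have hγim : γ ∈ G '' {y : ↥Sph | y ≠ x} := by
    apply himg.Icc_subset ⟨u, hux, rfl⟩ ⟨v, hvx, rfl⟩
    exact ⟨hγu.le, hγv.le⟩
  obtain ⟨y, hyA, hyγ⟩ := hγim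
  exact hyA (hinj (hyγ.trans hx.symm))

variable {X : Type*} [TopologicalSpace X]

lemma jordan_connected {J : Set X} (h : IsJordanCurve J) : IsConnected J := by
  obtain ⟨φ, hc, hinj, hr⟩ := h
  rw [← hr]
  exact isConnected_range hc

lemma not_jordan_of_finite {J : Set X} (hJ : J.Finite) : ¬ IsJordanCurve J := by
  rintro ⟨φ, hc, hinj, hr⟩
  have := Set.infinite_range_of_injective hinj
  rw [hr] at this
  exact this hJ

lemma not_jordan_of_cantor {J : Set X} (hc : Nonempty (↥J ≃ₜ (ℕ → Bool))) :
    ¬ IsJordanCurve J := by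
  intro hJ
  obtain ⟨e⟩ := hc
  have hcon : IsConnected J := jordan_connected hJ
  have : ConnectedSpace ↥J := isConnected_iff_connectedSpace.mp hcon
  have hpre : IsPreconnected (Set.range e) := isPreconnected_range e.continuous
  have hr : Set.range e = univ := Set.range_eq_univ.mpr e.surjective
  rw [hr] at hpre
  have hsub : (univ : Set (ℕ → Bool)).Subsingleton :=
    TotallyDisconnectedSpace.isTotallyDisconnected_univ _ (subset_refl _) hpre
  have : (fun _ : ℕ => false) = (fun _ : ℕ => true) :=
    hsub (mem_univ _) (mem_univ _)
  simpa using congrFun this 0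

end JC


namespace JC

open Set Metric

noncomputable def Mfun (v : E2) : ℝ := max |v 0| |v 1|

lemma Mfun_pos {v : E2} (hv : v 0^2 + v 1^2 = 1) : 0 < Mfun v := by
  rcases lt_or_ge 0 (Mfun v) with h | h
  · exact h
  · exfalso
    have h0 : |v 0| ≤ 0 := le_trans (le_max_left _ _) h
    have h1 : |v 1| ≤ 0 := le_trans (le_max_right _ _) h
    have h0' : v 0 = 0 := abs_nonpos_iff.mp h0
    have h1' : v 1 = 0 := abs_nonpos_iff.mp h1
    rw [h0', h1'] at hv
    norm_num at hv

lemma abs_le_M0 (v : E2) : |v 0| ≤ Mfun v := le_max_left _ _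
lemma abs_le_M1 (v : E2) : |v 1| ≤ Mfun v := le_max_right _ _

lemma cont_Mfun : Continuous Mfun :=
  ((cont_coord 0).abs).max ((cont_coord 1).abs)

noncomputable def phiO (v : ↥Sph) : ℝ × ℝ :=
  ((v.1 0 / Mfun v.1 + 1)/2, (v.1 1 / Mfun v.1 + 1)/2)

lemma cont_phiO : Continuous phiO := by
  have hM : ∀ v : ↥Sph, Mfun v.1 ≠ 0 := fun v => (Mfun_pos (unit_of_mem v.2)).ne'
  have hMc : Continuous fun v : ↥Sph => Mfun v.1 := cont_Mfun.comp continuous_subtype_val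
  have h0 : Continuous fun v : ↥Sph => v.1 0 := (cont_coord 0).comp continuous_subtype_val
  have h1 : Continuous fun v : ↥Sph => v.1 1 := (cont_coord 1).comp continuous_subtype_val
  exact Continuous.prodMk
    (((h0.div hMc hM).add continuous_const).div_const 2)
    (((h1.div hMc hM).add continuous_const).div_const 2)

lemma inj_phiO : Function.Injective phiO := by
  intro u v h
  rw [Prod.ext_iff] at h
  obtain ⟨h0, h1⟩ := h
  simp only [phiO] at h0 h1
  have hu := unit_of_mem u.2
  have hv := unit_of_mem v.2
  have hMu := Mfun_pos hu
  have hMv := Mfun_pos hv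
  have e0 : u.1 0 / Mfun u.1 = v.1 0 / Mfun v.1 := by linarith
  have e1 : u.1 1 / Mfun u.1 = v.1 1 / Mfun v.1 := by linarith
  have f0 : u.1 0 * Mfun v.1 = v.1 0 * Mfun u.1 := by
    rw [div_eq_div_iff hMu.ne' hMv.ne'] at e0
    exact e0
  have f1 : u.1 1 * Mfun v.1 = v.1 1 * Mfun u.1 := by
    rw [div_eq_div_iff hMu.ne' hMv.ne'] at e1
    exact e1
  -- (Mv)^2 = (Mu)^2 from unit conditions
  have hsq : Mfun v.1 ^ 2 = Mfun u.1 ^ 2 := by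
    have : (u.1 0 * Mfun v.1)^2 + (u.1 1 * Mfun v.1)^2
        = (v.1 0 * Mfun u.1)^2 + (v.1 1 * Mfun u.1)^2 := by rw [f0, f1]
    nlinarith [this, hu, hv]
  have hMeq : Mfun v.1 = Mfun u.1 := by nlinarith [hsq, hMu, hMv]
  apply Subtype.ext
  apply e2_ext
  · have := f0; rw [hMeq] at this; exact mul_right_cancel₀ hMu.ne' this
  · have := f1; rw [hMeq] at this; exact mul_right_cancel₀ hMu.ne' this

lemma range_phiO : Set.range phiO = Obd := by
  ext z
  constructor
  · rintro ⟨v, rfl⟩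
    have hv := unit_of_mem v.2
    have hM := Mfun_pos hv
    have h0 := abs_le_M0 v.1
    have h1 := abs_le_M1 v.1
    have habs0 := abs_le.mp h0
    have habs1 := abs_le.mp h1
    constructor
    · constructor
      · constructor
        · simp only [phiO]
          rw [le_div_iff₀ (by norm_num : (0:ℝ) < 2)]
          have : -1 ≤ v.1 0 / Mfun v.1 := by
            rw [le_div_iff₀ hM]; linarith
          linarith
        · simp only [phiO]
          rw [div_le_iff₀ (by norm_num : (0:ℝ) < 2)]
          have : v.1 0 / Mfun v.1 ≤ 1 := by
            rw [div_le_iff₀ hM]; linarith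
          linarith
      · constructor
        · simp only [phiO]
          rw [le_div_iff₀ (by norm_num : (0:ℝ) < 2)]
          have : -1 ≤ v.1 1 / Mfun v.1 := by
            rw [le_div_iff₀ hM]; linarith
          linarith
        · simp only [phiO]
          rw [div_le_iff₀ (by norm_num : (0:ℝ) < 2)]
          have : v.1 1 / Mfun v.1 ≤ 1 := by
            rw [div_le_iff₀ hM]; linarith
          linarith
    · -- one coordinate is extremal
      rcases max_cases |v.1 0| |v.1 1| with ⟨hMe, _⟩ | ⟨hMe, _⟩
      · rcases abs_cases (v.1 0) with ⟨he, _⟩ | ⟨he, _⟩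
        · have hM0 : Mfun v.1 = v.1 0 := by rw [Mfun, hMe, he]
          have hpos : 0 < v.1 0 := hM0 ▸ hM
          right; left
          show (v.1 0 / Mfun v.1 + 1)/2 = 1
          rw [hM0, div_self hpos.ne']
          norm_num
        · have hM0 : Mfun v.1 = -v.1 0 := by rw [Mfun, hMe, he]
          have hpos : 0 < -v.1 0 := hM0 ▸ hM
          left
          show (v.1 0 / Mfun v.1 + 1)/2 = 0
          rw [hM0, div_neg, div_self (by linarith : v.1 0 ≠ 0)]
          norm_num
      · rcases abs_cases (v.1 1) with ⟨he, _⟩ | ⟨he, _⟩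
        · have hM1 : Mfun v.1 = v.1 1 := by rw [Mfun, hMe, he]
          have hpos : 0 < v.1 1 := hM1 ▸ hM
          right; right; right
          show (v.1 1 / Mfun v.1 + 1)/2 = 1
          rw [hM1, div_self hpos.ne']
          norm_num
        · have hM1 : Mfun v.1 = -v.1 1 := by rw [Mfun, hMe, he]
          have hpos : 0 < -v.1 1 := hM1 ▸ hM
          right; right; left
          show (v.1 1 / Mfun v.1 + 1)/2 = 0
          rw [hM1, div_neg, div_self (by linarith : v.1 1 ≠ 0)]
          norm_num
  · rintro ⟨⟨⟨hx0, hx1⟩, ⟨hy0, hy1⟩⟩, hside⟩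
    set u0 := 2*z.1 - 1 with hu0
    set u1 := 2*z.2 - 1 with hu1
    have habs0 : |u0| ≤ 1 := by rw [abs_le]; constructor <;> [linarith; linarith]
    have habs1 : |u1| ≤ 1 := by rw [abs_le]; constructor <;> [linarith; linarith]
    have hmax : max |u0| |u1| = 1 := by
      rcases hside with h | h | h | h
      · have : u0 = -1 := by rw [hu0, h]; ring
        rw [this]
        rw [abs_neg, abs_one]
        exact max_eq_left habs1
      · have : u0 = 1 := by rw [hu0, h]; ring
        rw [this, abs_one]
        exact max_eq_left habs1
      · have : u1 = -1 := by rw [hu1, h]; ring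
        rw [this, abs_neg, abs_one]
        exact max_eq_right habs0
      · have : u1 = 1 := by rw [hu1, h]; ring
        rw [this, abs_one]
        exact max_eq_right habs0
    have hsumpos : 0 < u0^2 + u1^2 := by
      rcases max_cases |u0| |u1| with ⟨hMe, _⟩ | ⟨hMe, _⟩
      · have : |u0| = 1 := by rw [← hMe, hmax]
        nlinarith [this, sq_abs u0, sq_nonneg u1]
      · have : |u1| = 1 := by rw [← hMe, hmax]
        nlinarith [this, sq_abs u1, sq_nonneg u0]
    set n := Real.sqrt (u0^2 + u1^2) with hn
    have hnpos : 0 < n := Real.sqrt_pos.mpr hsumpos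
    set v : E2 := mk2 (u0/n) (u1/n) with hv
    have hvmem : v ∈ Sph := by
      rw [mem_Sph_iff]
      simp only [hv, mk2_zero, mk2_one]
      rw [div_pow, div_pow, ← add_div, hn, Real.sq_sqrt hsumpos.le]
      field_simp
    have hMv : Mfun v = 1/n := by
      simp only [Mfun, hv, mk2_zero, mk2_one, abs_div, abs_of_pos hnpos]
      rw [max_div_div_right hnpos.le, hmax]
    refine ⟨⟨v, hvmem⟩, ?_⟩
    simp only [phiO, hv, mk2_zero, mk2_one, hMv]
    have : ∀ w : ℝ, (w/n) / (1/n) = w := by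
      intro w
      field_simp
    rw [← hv, hMv, this, this]
    rw [hu0, hu1]
    show ((2*z.1 - 1 + 1)/2, (2*z.2 - 1 + 1)/2) = z
    ext <;> simp <;> ring

lemma jordan_Obd : IsJordanCurve Obd := ⟨phiO, cont_phiO, inj_phiO, range_phiO⟩

end JC


namespace SC

open Set

variable {p : ℕ}

lemma val_single (hp : 3 ≤ p) (d : ℕ) : val p (fun k => if k = 0 then d else 0) = (d:ℝ) / p := by
  unfold val
  rw [tsum_eq_single 0 (fun k hk => by simp [hk])]
  simp

lemma z0_mem_sp (hp : 3 ≤ p) (hodd : Odd p) : ((1:ℝ)/p, ((p:ℝ)-1)/p) ∈ Sp p := by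
  have hm : 2 * ((p-1)/2) = p - 1 := by obtain ⟨r, hr⟩ := hodd; omega
  refine ⟨fun k => if k = 0 then 1 else 0, fun k => if k = 0 then p - 1 else 0, ?_, ?_, ?_⟩
  · intro k
    rcases eq_or_ne k 0 with rfl | hk
    · refine ⟨?_, ?_, ?_⟩
      · show (if (0:ℕ) = 0 then 1 else 0) < p
        rw [if_pos rfl]; omega
      · show (if (0:ℕ) = 0 then p - 1 else 0) < p
        rw [if_pos rfl]; omega
      · show ¬((if (0:ℕ) = 0 then 1 else 0) = (p-1)/2 ∧ (if (0:ℕ) = 0 then p - 1 else 0) = (p-1)/2)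
        rw [if_pos rfl, if_pos rfl]
        rintro ⟨h1, h2⟩
        omega
    · refine ⟨?_, ?_, ?_⟩
      · show (if k = 0 then 1 else 0) < p
        rw [if_neg hk]; omega
      · show (if k = 0 then p - 1 else 0) < p
        rw [if_neg hk]; omega
      · show ¬((if k = 0 then 1 else 0) = (p-1)/2 ∧ (if k = 0 then p - 1 else 0) = (p-1)/2)
        rw [if_neg hk, if_neg hk]
        rintro ⟨h1, h2⟩
        omega
  · show (1:ℝ)/p = val p _
    rw [val_single hp 1]
    norm_num
  · show ((p:ℝ)-1)/p = val p _
    rw [val_single hp (p-1)]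
    have : ((p-1:ℕ):ℝ) = (p:ℝ) - 1 := by
      have h1 : (1:ℕ) ≤ p := by omega
      push_cast [h1]; ring
    rw [this]

lemma z0_not_obd (hp : 3 ≤ p) : ((1:ℝ)/p, ((p:ℝ)-1)/p) ∉ Obd := by
  have hq := one_lt_q hp
  rintro ⟨-, h | h | h | h⟩ <;> simp only at h
  · rw [div_eq_zero_iff] at h
    rcases h with h | h
    · norm_num at h
    · linarith
  · rw [div_eq_one_iff_eq (by linarith)] at h
    linarith
  · rw [div_eq_zero_iff] at h
    rcases h with h | h
    · linarith
    · linarith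
  · rw [div_eq_one_iff_eq (by linarith)] at h
    linarith

lemma not_jordan_sp (hp : 3 ≤ p) (hodd : Odd p) : ¬ IsJordanCurve (Sp p) := by
  rintro ⟨φ, hc, hinj, hr⟩
  obtain ⟨ψ, hcψ, hinjψ, hrψ⟩ := JC.jordan_Obd
  have hmem : ∀ s, φ s ∈ Sp p := fun s => hr ▸ Set.mem_range_self s
  set φ' : ↥JC.Sph → ↥(Sp p) := fun s => ⟨φ s, hmem s⟩ with hφ'
  have hbij : Function.Bijective φ' := by
    constructor
    · intro a b hab
      exact hinj (congrArg Subtype.val hab)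
    · rintro ⟨z, hz⟩
      rw [← hr] at hz
      obtain ⟨s, hs⟩ := hz
      exact ⟨s, Subtype.ext hs⟩
  set e := Equiv.ofBijective φ' hbij with he
  have hce : Continuous e := Continuous.subtype_mk hc _
  set H := Continuous.homeoOfEquivCompactToT2 (f := e) hce with hH
  set z₀ : ℝ × ℝ := ((1:ℝ)/p, ((p:ℝ)-1)/p) with hz₀
  have hz₀S : z₀ ∈ Sp p := z0_mem_sp hp hodd
  have hz₀O : z₀ ∉ Obd := z0_not_obd hp
  set q : ↥JC.Sph := H.symm ⟨z₀, hz₀S⟩ with hqdef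
  have hψmem : ∀ s, ψ s ∈ Obd := fun s => hrψ ▸ Set.mem_range_self s
  set h : ↥JC.Sph → ↥JC.Sph :=
    fun s => H.symm ⟨ψ s, obd_subset_sp hp (hψmem s)⟩ with hhdef
  have hch : Continuous h := H.symm.continuous.comp (Continuous.subtype_mk hcψ _)
  have hinjh : Function.Injective h := by
    intro a b hab
    have := H.symm.injective hab
    exact hinjψ (congrArg Subtype.val this)
  have hne_q : ∀ s, h s ≠ q := by
    intro s hcon
    have := congrArg H hcon
    rw [hhdef] at this
    simp only [Homeomorph.apply_symm_apply, hqdef] at this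
    have hval : ψ s = z₀ := congrArg Subtype.val this
    exact hz₀O (hval ▸ hψmem s)
  have hqu := JC.unit_of_mem q.2
  set G : ↥JC.Sph → ℝ := fun s => JC.Ffun q.1 (h s).1 with hGdef
  have hGc : Continuous G := by
    have hcoord0 : Continuous fun s : ↥JC.Sph => (h s).1 0 :=
      (JC.cont_coord 0).comp (continuous_subtype_val.comp hch)
    have hcoord1 : Continuous fun s : ↥JC.Sph => (h s).1 1 :=
      (JC.cont_coord 1).comp (continuous_subtype_val.comp hch)
    apply Continuous.div
    · exact (hcoord0.mul continuous_const).sub (hcoord1.mul continuous_const)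
    · exact continuous_const.sub ((hcoord0.mul continuous_const).add (hcoord1.mul continuous_const))
    · intro s
      have hlt := JC.inner_lt_one (JC.unit_of_mem (h s).2) hqu
        (fun hc => hne_q s (Subtype.ext hc))
      intro hzero
      rw [sub_eq_zero] at hzero
      rw [← hzero] at hlt
      exact lt_irrefl _ hlt
  have hGi : Function.Injective G := by
    intro a b hab
    apply hinjh
    apply Subtype.ext
    exact JC.Ffun_inj hqu (JC.unit_of_mem (h a).2) (JC.unit_of_mem (h b).2)
      (fun hc => hne_q a (Subtype.ext hc)) (fun hc => hne_q b (Subtype.ext hc)) hab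
  exact JC.no_inj_circle_real G hGc hGi

end SC


namespace SC

open Set

variable {p : ℕ}

lemma fixset_true_eq (g : (ℝ×ℝ) → (ℝ×ℝ)) :
    FixSet p g true = {z ∈ Sp p | z ∈ Obd ∧ g z = z} := by
  simp [FixSet]

lemma fixset_false_eq (g : (ℝ×ℝ) → (ℝ×ℝ)) :
    FixSet p g false = {z ∈ Sp p | g z = z} := by
  simp [FixSet]

lemma fix_id_true (hp : 3 ≤ p) : FixSet p (id : (ℝ×ℝ) → (ℝ×ℝ)) true = Obd := by
  rw [fixset_true_eq]
  ext z
  constructor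
  · rintro ⟨-, hO, -⟩
    exact hO
  · intro hO
    exact ⟨obd_subset_sp hp hO, hO, rfl⟩

lemma fix_id_false : FixSet p (id : (ℝ×ℝ) → (ℝ×ℝ)) false = Sp p := by
  rw [fixset_false_eq]
  ext z
  exact ⟨fun h => h.1, fun h => ⟨h, rfl⟩⟩

lemma fix_sub_center {g : (ℝ×ℝ) → (ℝ×ℝ)} (s : Bool)
    (hg : ∀ z : ℝ×ℝ, g z = z → z = ((1/2:ℝ), (1/2:ℝ))) :
    FixSet p g s ⊆ {((1/2:ℝ), (1/2:ℝ))} := by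
  cases s
  · rw [fixset_false_eq]
    rintro z ⟨-, hz⟩
    exact hg z hz
  · rw [fixset_true_eq]
    rintro z ⟨-, -, hz⟩
    exact hg z hz

lemma rot90_fix : ∀ z : ℝ×ℝ, (1 - z.2, z.1) = z → z = ((1/2:ℝ), (1/2:ℝ)) := by
  intro z hz
  rw [Prod.ext_iff] at hz ⊢
  simp only at hz ⊢
  obtain ⟨h1, h2⟩ := hz
  constructor <;> linarith

lemma rot180_fix : ∀ z : ℝ×ℝ, (1 - z.1, 1 - z.2) = z → z = ((1/2:ℝ), (1/2:ℝ)) := by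
  intro z hz
  rw [Prod.ext_iff] at hz ⊢
  simp only at hz ⊢
  obtain ⟨h1, h2⟩ := hz
  constructor <;> linarith

lemma rot270_fix : ∀ z : ℝ×ℝ, (z.2, 1 - z.1) = z → z = ((1/2:ℝ), (1/2:ℝ)) := by
  intro z hz
  rw [Prod.ext_iff] at hz ⊢
  simp only at hz ⊢
  obtain ⟨h1, h2⟩ := hz
  constructor <;> linarith

lemma fix_swap_true : FixSet p (fun z => (z.2, z.1)) true ⊆ {((0:ℝ),(0:ℝ)), ((1:ℝ),(1:ℝ))} := by
  rw [fixset_true_eq]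
  rintro z ⟨-, ⟨⟨-, -⟩, hside⟩, hz⟩
  rw [Prod.ext_iff] at hz
  simp only at hz
  obtain ⟨h1, -⟩ := hz
  rcases hside with h | h | h | h
  · exact Set.mem_insert_iff.mpr (Or.inl (by rw [Prod.ext_iff]; exact ⟨show z.1 = (0:ℝ) from by linarith, show z.2 = (0:ℝ) from by linarith⟩))
  · exact Set.mem_insert_iff.mpr (Or.inr (Set.mem_singleton_iff.mpr (by rw [Prod.ext_iff]; exact ⟨show z.1 = (1:ℝ) from by linarith, show z.2 = (1:ℝ) from by linarith⟩)))
  · exact Set.mem_insert_iff.mpr (Or.inl (by rw [Prod.ext_iff]; exact ⟨show z.1 = (0:ℝ) from by linarith, show z.2 = (0:ℝ) from by linarith⟩))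
  · exact Set.mem_insert_iff.mpr (Or.inr (Set.mem_singleton_iff.mpr (by rw [Prod.ext_iff]; exact ⟨show z.1 = (1:ℝ) from by linarith, show z.2 = (1:ℝ) from by linarith⟩)))

lemma fix_vert_true : FixSet p (fun z => (1 - z.1, z.2)) true
    ⊆ {((1/2:ℝ),(0:ℝ)), ((1/2:ℝ),(1:ℝ))} := by
  rw [fixset_true_eq]
  rintro z ⟨-, ⟨⟨-, -⟩, hside⟩, hz⟩
  rw [Prod.ext_iff] at hz
  simp only at hz
  obtain ⟨h1, -⟩ := hz
  have hhalf : z.1 = 1/2 := by linarith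
  rcases hside with h | h | h | h
  · exfalso; rw [hhalf] at h; norm_num at h
  · exfalso; rw [hhalf] at h; norm_num at h
  · exact Set.mem_insert_iff.mpr (Or.inl (by rw [Prod.ext_iff]; exact ⟨show z.1 = (1/2:ℝ) from by linarith, show z.2 = (0:ℝ) from by linarith⟩))
  · exact Set.mem_insert_iff.mpr (Or.inr (Set.mem_singleton_iff.mpr (by rw [Prod.ext_iff]; exact ⟨show z.1 = (1/2:ℝ) from by linarith, show z.2 = (1:ℝ) from by linarith⟩)))

lemma fix_horiz_true : FixSet p (fun z => (z.1, 1 - z.2)) true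
    ⊆ {((0:ℝ),(1/2:ℝ)), ((1:ℝ),(1/2:ℝ))} := by
  rw [fixset_true_eq]
  rintro z ⟨-, ⟨⟨-, -⟩, hside⟩, hz⟩
  rw [Prod.ext_iff] at hz
  simp only at hz
  obtain ⟨-, h2⟩ := hz
  have hhalf : z.2 = 1/2 := by linarith
  rcases hside with h | h | h | h
  · exact Set.mem_insert_iff.mpr (Or.inl (by rw [Prod.ext_iff]; exact ⟨show z.1 = (0:ℝ) from by linarith, show z.2 = (1/2:ℝ) from by linarith⟩))
  · exact Set.mem_insert_iff.mpr (Or.inr (Set.mem_singleton_iff.mpr (by rw [Prod.ext_iff]; exact ⟨show z.1 = (1:ℝ) from by linarith, show z.2 = (1/2:ℝ) from by linarith⟩)))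
  · exfalso; rw [hhalf] at h; norm_num at h
  · exfalso; rw [hhalf] at h; norm_num at h

lemma fix_anti_true : FixSet p (fun z => (1 - z.2, 1 - z.1)) true
    ⊆ {((0:ℝ),(1:ℝ)), ((1:ℝ),(0:ℝ))} := by
  rw [fixset_true_eq]
  rintro z ⟨-, ⟨⟨-, -⟩, hside⟩, hz⟩
  rw [Prod.ext_iff] at hz
  simp only at hz
  obtain ⟨h1, -⟩ := hz
  rcases hside with h | h | h | h
  · exact Set.mem_insert_iff.mpr (Or.inl (by rw [Prod.ext_iff]; exact ⟨show z.1 = (0:ℝ) from by linarith, show z.2 = (1:ℝ) from by linarith⟩))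
  · exact Set.mem_insert_iff.mpr (Or.inr (Set.mem_singleton_iff.mpr (by rw [Prod.ext_iff]; exact ⟨show z.1 = (1:ℝ) from by linarith, show z.2 = (0:ℝ) from by linarith⟩)))
  · exact Set.mem_insert_iff.mpr (Or.inr (Set.mem_singleton_iff.mpr (by rw [Prod.ext_iff]; exact ⟨show z.1 = (1:ℝ) from by linarith, show z.2 = (0:ℝ) from by linarith⟩)))
  · exact Set.mem_insert_iff.mpr (Or.inl (by rw [Prod.ext_iff]; exact ⟨show z.1 = (0:ℝ) from by linarith, show z.2 = (1:ℝ) from by linarith⟩))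

lemma fix_vert_false (hp : 3 ≤ p) (hodd : Odd p) :
    FixSet p (fun z => (1 - z.1, z.2)) false = (fun y => ((1/2:ℝ), y)) '' Kc p := by
  rw [fixset_false_eq]
  ext z
  constructor
  · rintro ⟨hSp, hz⟩
    rw [Prod.ext_iff] at hz
    simp only at hz
    have hhalf : z.1 = 1/2 := by linarith [hz.1]
    have hSp2 : SpPair p z.1 z.2 := hSp
    have hSp' : SpPair p (1/2) z.2 := by rw [← hhalf]; exact hSp2
    exact ⟨z.2, (sp_half_left hp hodd).mp hSp', by rw [Prod.ext_iff]; exact ⟨hhalf.symm, rfl⟩⟩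
  · rintro ⟨y, hy, rfl⟩
    refine ⟨(sp_half_left hp hodd).mpr hy, ?_⟩
    rw [Prod.ext_iff]
    constructor <;> simp <;> norm_num

lemma fix_horiz_false (hp : 3 ≤ p) (hodd : Odd p) :
    FixSet p (fun z => (z.1, 1 - z.2)) false = (fun x => (x, (1/2:ℝ))) '' Kc p := by
  rw [fixset_false_eq]
  ext z
  constructor
  · rintro ⟨hSp, hz⟩
    rw [Prod.ext_iff] at hz
    simp only at hz
    have hhalf : z.2 = 1/2 := by linarith [hz.2]
    have hSp2 : SpPair p z.1 z.2 := hSp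
    have hSp' : SpPair p z.1 (1/2) := by rw [← hhalf]; exact hSp2
    exact ⟨z.1, (sp_half_right hp hodd).mp hSp', by rw [Prod.ext_iff]; exact ⟨rfl, hhalf.symm⟩⟩
  · rintro ⟨x, hx, rfl⟩
    refine ⟨(sp_half_right hp hodd).mpr hx, ?_⟩
    rw [Prod.ext_iff]
    constructor <;> simp <;> norm_num

lemma fix_diag_false (hp : 3 ≤ p) (hodd : Odd p) :
    FixSet p (fun z => (z.2, z.1)) false = (fun x => ((x:ℝ), x)) '' Kc p := by
  rw [fixset_false_eq]
  ext z
  constructor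
  · rintro ⟨hSp, hz⟩
    rw [Prod.ext_iff] at hz
    simp only at hz
    have hd : z.2 = z.1 := hz.1
    have hSp2 : SpPair p z.1 z.2 := hSp
    have hSp' : SpPair p z.1 z.1 := by rw [hd] at hSp2; exact hSp2
    exact ⟨z.1, (sp_diag hp hodd).mp hSp', by rw [Prod.ext_iff]; exact ⟨rfl, hd.symm⟩⟩
  · rintro ⟨x, hx, rfl⟩
    exact ⟨(sp_diag hp hodd).mpr hx, rfl⟩

lemma fix_anti_false (hp : 3 ≤ p) (hodd : Odd p) :
    FixSet p (fun z => (1 - z.2, 1 - z.1)) false = (fun x => ((x:ℝ), 1 - x)) '' Kc p := by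
  rw [fixset_false_eq]
  ext z
  constructor
  · rintro ⟨hSp, hz⟩
    rw [Prod.ext_iff] at hz
    simp only at hz
    have hd : z.2 = 1 - z.1 := by linarith [hz.1]
    have hSp2 : SpPair p z.1 z.2 := hSp
    have hSp' : SpPair p z.1 (1 - z.1) := by rw [← hd]; exact hSp2
    exact ⟨z.1, (sp_anti hp hodd).mp hSp', by rw [Prod.ext_iff]; exact ⟨rfl, hd.symm⟩⟩
  · rintro ⟨x, hx, rfl⟩
    refine ⟨(sp_anti hp hodd).mpr hx, ?_⟩
    rw [Prod.ext_iff]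
    constructor <;> simp

lemma homeo_image {f : ℝ → ℝ×ℝ} {g : ℝ×ℝ → ℝ} (hf : Continuous f) (hg : Continuous g)
    (hgf : ∀ x, g (f x) = x) (S : Set ℝ) : Nonempty (↥(f '' S) ≃ₜ ↥S) := by
  refine ⟨{
    toFun := fun z => ⟨g z.1, by
      obtain ⟨x, hx, hfx⟩ := z.2
      rw [← hfx, hgf]
      exact hx⟩
    invFun := fun x => ⟨f x.1, Set.mem_image_of_mem f x.2⟩
    left_inv := ?_
    right_inv := ?_
    continuous_toFun := ?_
    continuous_invFun := ?_ }⟩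
  · rintro ⟨z, hz⟩
    obtain ⟨x, hx, rfl⟩ := hz
    apply Subtype.ext
    simp [hgf]
  · rintro ⟨x, hx⟩
    apply Subtype.ext
    simp [hgf]
  · exact Continuous.subtype_mk (hg.comp continuous_subtype_val) _
  · exact Continuous.subtype_mk (hf.comp continuous_subtype_val) _

lemma Kc_cantor (hp : 3 ≤ p) (hodd : Odd p) : Nonempty (↥(Kc p) ≃ₜ (ℕ → Bool)) :=
  Cantor.cantor_homeo (Kc_compact hp) (Kc_acc hp) (Kc_gaps hp hodd) ⟨0, Kc_nonempty hp⟩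

lemma image_cantor (hp : 3 ≤ p) (hodd : Odd p) {f : ℝ → ℝ×ℝ} {g : ℝ×ℝ → ℝ}
    (hf : Continuous f) (hg : Continuous g) (hgf : ∀ x, g (f x) = x) :
    Nonempty (↥(f '' Kc p) ≃ₜ (ℕ → Bool)) := by
  obtain ⟨e⟩ := homeo_image hf hg hgf (Kc p)
  obtain ⟨c⟩ := Kc_cantor hp hodd
  exact ⟨e.trans c⟩

end SC


namespace SC

open Set

variable {p : ℕ}

lemma rot90_ne_id : (fun z : ℝ×ℝ => (1 - z.2, z.1)) ≠ id := by
  intro h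
  have := congrFun h ((0:ℝ),(0:ℝ))
  simp [Prod.ext_iff] at this

lemma rot180_ne_id : (fun z : ℝ×ℝ => (1 - z.1, 1 - z.2)) ≠ id := by
  intro h
  have := congrFun h ((0:ℝ),(0:ℝ))
  simp [Prod.ext_iff] at this

lemma rot270_ne_id : (fun z : ℝ×ℝ => (z.2, 1 - z.1)) ≠ id := by
  intro h
  have := congrFun h ((0:ℝ),(0:ℝ))
  simp [Prod.ext_iff] at this

lemma swap_ne_id : (fun z : ℝ×ℝ => (z.2, z.1)) ≠ id := by
  intro h
  have := congrFun h ((0:ℝ),(1:ℝ))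
  simp [Prod.ext_iff] at this

lemma vert_ne_id : (fun z : ℝ×ℝ => (1 - z.1, z.2)) ≠ id := by
  intro h
  have := congrFun h ((0:ℝ),(0:ℝ))
  simp [Prod.ext_iff] at this

lemma horiz_ne_id : (fun z : ℝ×ℝ => (z.1, 1 - z.2)) ≠ id := by
  intro h
  have := congrFun h ((0:ℝ),(0:ℝ))
  simp [Prod.ext_iff] at this

lemma anti_ne_id : (fun z : ℝ×ℝ => (1 - z.2, 1 - z.1)) ≠ id := by
  intro h
  have := congrFun h ((0:ℝ),(0:ℝ))
  simp [Prod.ext_iff] at this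

end SC

-- MORE8
/-- Among the 16 isometries of the doubled carpet `D_p` (the 8 square symmetries acting
on both faces, together with their compositions with the face-swapping involution `R`),
the only one whose fixed point set is a Jordan curve is `R` itself (`g = id`,
`s = true`), and its fixed point set is the outer circle `O`; every other one has fixed
point set that is finite (possibly empty), homeomorphic to the Cantor set, or all of
`D_p`. -/
theorem stmt19 (p : ℕ) (hp : 3 ≤ p) (hodd : Odd p) :
    ∀ g ∈ D4set, ∀ s : Bool,
      (IsJordanCurve (FixSet p g s) ↔ (g = id ∧ s = true)) ∧
      ((g = id ∧ s = true) → FixSet p g s = Obd) ∧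
      (¬(g = id ∧ s = true) →
        (FixSet p g s).Finite ∨ Nonempty (↥(FixSet p g s) ≃ₜ (ℕ → Bool)) ∨
          FixSet p g s = Sp p) := by
  classical
  intro g hg s
  simp only [D4set, Set.mem_insert_iff, Set.mem_singleton_iff] at hg
  -- helper for rotation-type cases (finite fixed sets) with g ≠ id
  have finCase : ∀ (g' : (ℝ×ℝ) → (ℝ×ℝ)) (s' : Bool), g' ≠ id → (FixSet p g' s').Finite →
      (IsJordanCurve (FixSet p g' s') ↔ (g' = id ∧ s' = true)) ∧
      ((g' = id ∧ s' = true) → FixSet p g' s' = Obd) ∧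
      (¬(g' = id ∧ s' = true) →
        (FixSet p g' s').Finite ∨ Nonempty (↥(FixSet p g' s') ≃ₜ (ℕ → Bool)) ∨
          FixSet p g' s' = Sp p) := by
    intro g' s' hne hfin
    refine ⟨iff_of_false (JC.not_jordan_of_finite hfin) (fun h => hne h.1), ?_, ?_⟩
    · intro h; exact absurd h.1 hne
    · intro _; exact Or.inl hfin
  have cantorCase : ∀ (g' : (ℝ×ℝ) → (ℝ×ℝ)) (s' : Bool), g' ≠ id →
      Nonempty (↥(FixSet p g' s') ≃ₜ (ℕ → Bool)) →
      (IsJordanCurve (FixSet p g' s') ↔ (g' = id ∧ s' = true)) ∧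
      ((g' = id ∧ s' = true) → FixSet p g' s' = Obd) ∧
      (¬(g' = id ∧ s' = true) →
        (FixSet p g' s').Finite ∨ Nonempty (↥(FixSet p g' s') ≃ₜ (ℕ → Bool)) ∨
          FixSet p g' s' = Sp p) := by
    intro g' s' hne hcant
    refine ⟨iff_of_false (JC.not_jordan_of_cantor hcant) (fun h => hne h.1), ?_, ?_⟩
    · intro h; exact absurd h.1 hne
    · intro _; exact Or.inr (Or.inl hcant)
  rcases hg with rfl | rfl | rfl | rfl | rfl | rfl | rfl | rfl
  · -- identity
    cases s
    · -- s = false : fixed set is all of Sp p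
      have he : FixSet p (fun z : ℝ×ℝ => z) false = Sp p := SC.fix_id_false
      refine ⟨?_, ?_, ?_⟩
      · apply iff_of_false
        · rw [he]; exact SC.not_jordan_sp hp hodd
        · rintro ⟨-, hs⟩; exact Bool.false_ne_true hs
      · rintro ⟨-, hs⟩; exact absurd hs Bool.false_ne_true
      · intro _; exact Or.inr (Or.inr he)
    · -- s = true : fixed set is Obd
      have he : FixSet p (fun z : ℝ×ℝ => z) true = Obd := SC.fix_id_true hp
      refine ⟨?_, ?_, ?_⟩
      · constructor
        · intro _; exact ⟨rfl, rfl⟩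
        · intro _; rw [he]; exact JC.jordan_Obd
      · intro _; exact he
      · intro hcon; exact absurd ⟨rfl, rfl⟩ hcon
  · -- rotation by 90
    exact finCase _ s SC.rot90_ne_id
      ((Set.finite_singleton _).subset (SC.fix_sub_center s SC.rot90_fix))
  · -- rotation by 180
    exact finCase _ s SC.rot180_ne_id
      ((Set.finite_singleton _).subset (SC.fix_sub_center s SC.rot180_fix))
  · -- rotation by 270
    exact finCase _ s SC.rot270_ne_id
      ((Set.finite_singleton _).subset (SC.fix_sub_center s SC.rot270_fix))
  · -- diagonal reflection (z.2, z.1)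
    cases s
    · apply cantorCase _ _ SC.swap_ne_id
      rw [SC.fix_diag_false hp hodd]
      exact SC.image_cantor hp hodd (continuous_id.prodMk continuous_id)
        continuous_fst (fun x => rfl)
    · exact finCase _ _ SC.swap_ne_id
        (((Set.finite_singleton _).insert _).subset SC.fix_swap_true)
  · -- vertical reflection (1 - z.1, z.2)
    cases s
    · apply cantorCase _ _ SC.vert_ne_id
      rw [SC.fix_vert_false hp hodd]
      exact SC.image_cantor hp hodd (continuous_const.prodMk continuous_id)
        continuous_snd (fun x => rfl)
    · exact finCase _ _ SC.vert_ne_id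
        (((Set.finite_singleton _).insert _).subset SC.fix_vert_true)
  · -- horizontal reflection (z.1, 1 - z.2)
    cases s
    · apply cantorCase _ _ SC.horiz_ne_id
      rw [SC.fix_horiz_false hp hodd]
      exact SC.image_cantor hp hodd (continuous_id.prodMk continuous_const)
        continuous_fst (fun x => rfl)
    · exact finCase _ _ SC.horiz_ne_id
        (((Set.finite_singleton _).insert _).subset SC.fix_horiz_true)
  · -- antidiagonal reflection (1 - z.2, 1 - z.1)
    cases s
    · apply cantorCase _ _ SC.anti_ne_id
      rw [SC.fix_anti_false hp hodd]
      exact SC.image_cantor hp hodd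
        (continuous_id.prodMk (continuous_const.sub continuous_id))
        continuous_fst (fun x => rfl)
    · exact finCase _ _ SC.anti_ne_id
        (((Set.finite_singleton _).insert _).subset SC.fix_anti_true)
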